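/- arXiv:0803.3787 — 6 statements merged into one kernel-verified Lean document; each statement's English description precedes it below -/
import Mathlib

section
/- For every real x ≥ 1, the absolute value of the partial sum ∑_{k=1}^{⌊x⌋} μ(k)/k is at most 1, where μ is the Möbius function. -/
open Finset ArithmeticFunction

private lemma sum_moebius_mul_floor_div (n : ℕ) (hn : 1 ≤ n) :
    ∑ d ∈ Finset.Icc 1 n, (ArithmeticFunction.moebius d : ℤ) * (n / d : ℕ) = 1 := by
  have key : ∑ m ∈ Finset.Icc 1 n, ∑ d ∈ m.divisors, (moebius d : ℤ) = 1 := by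
    have h1 : ∀ m : ℕ, ∑ d ∈ m.divisors, (moebius d : ℤ) = if m = 1 then 1 else 0 := by
      intro m
      rw [← coe_mul_zeta_apply, moebius_mul_coe_zeta, ArithmeticFunction.one_apply]
    simp only [h1]
    rw [Finset.sum_ite_eq' (Finset.Icc 1 n) 1 (fun _ => (1:ℤ))]
    simp [hn]
  have hdiv : ∀ m ∈ Finset.Icc 1 n, m.divisors = (Finset.Icc 1 n).filter (· ∣ m) := by
    intro m hm
    rw [Finset.mem_Icc] at hm
    ext d
    simp only [Nat.mem_divisors, Finset.mem_filter, Finset.mem_Icc]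
    constructor
    · intro ⟨hd, hm0⟩
      exact ⟨⟨Nat.pos_of_ne_zero (fun h => by simp [h] at hd; omega),
        le_trans (Nat.le_of_dvd (by omega) hd) hm.2⟩, hd⟩
    · intro ⟨_, hd⟩
      exact ⟨hd, by omega⟩
  have hswap : ∑ m ∈ Finset.Icc 1 n, ∑ d ∈ m.divisors, (moebius d : ℤ)
      = ∑ d ∈ Finset.Icc 1 n, (moebius d : ℤ) * (n / d : ℕ) := by
    rw [Finset.sum_congr rfl (fun m hm => by rw [hdiv m hm, Finset.sum_filter])]
    rw [Finset.sum_comm]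
    refine Finset.sum_congr rfl (fun d hd => ?_)
    rw [← Finset.sum_filter, Finset.sum_const]
    rw [show Finset.Icc 1 n = Finset.Ioc 0 n from Finset.Icc_add_one_left_eq_Ioc 0 n,
      Nat.Ioc_filter_dvd_card_eq_div]
    rw [nsmul_eq_mul, mul_comm]
  rw [← hswap, key]

theorem abs_sum_moebius_div_le_one (x : ℝ) (hx : 1 ≤ x) :
    |∑ k ∈ Finset.Icc 1 ⌊x⌋₊, (ArithmeticFunction.moebius k : ℝ) / k| ≤ 1 := by
  set n := ⌊x⌋₊ with hn_def
  have hn : 1 ≤ n := Nat.le_floor (by exact_mod_cast hx)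
  have hident : ∑ d ∈ Finset.Icc 1 n, (moebius d : ℝ) * (n / d : ℕ) = 1 := by
    have h2 : ((∑ d ∈ Finset.Icc 1 n, (moebius d : ℤ) * (n / d : ℕ) : ℤ) : ℝ) = 1 := by
      exact_mod_cast congrArg (fun z : ℤ => (z : ℝ)) (sum_moebius_mul_floor_div n hn)
    push_cast at h2
    exact h2
  set S := ∑ k ∈ Finset.Icc 1 n, (moebius k : ℝ) / k with hS
  have hnS : (n : ℝ) * S = ∑ k ∈ Finset.Icc 1 n, (moebius k : ℝ) * ((n : ℝ) / k) := by
    rw [hS, Finset.mul_sum]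
    refine Finset.sum_congr rfl (fun k hk => ?_)
    ring
  have hdiff : (n : ℝ) * S - 1 =
      ∑ k ∈ Finset.Icc 1 n, (moebius k : ℝ) * ((n : ℝ) / k - ((n / k : ℕ) : ℝ)) := by
    rw [hnS, ← hident, ← Finset.sum_sub_distrib]
    refine Finset.sum_congr rfl (fun k hk => ?_)
    ring
  have hbound : |(n : ℝ) * S - 1| ≤ (n : ℝ) - 1 := by
    rw [hdiff]
    calc |∑ k ∈ Finset.Icc 1 n, (moebius k : ℝ) * ((n : ℝ) / k - ((n / k : ℕ) : ℝ))|
        ≤ ∑ k ∈ Finset.Icc 1 n, |(moebius k : ℝ) * ((n : ℝ) / k - ((n / k : ℕ) : ℝ))| :=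
          Finset.abs_sum_le_sum_abs _ _
      _ ≤ ∑ k ∈ Finset.Icc 1 n, ((1:ℝ) - if k = 1 then 1 else 0) := by
          refine Finset.sum_le_sum (fun k hk => ?_)
          rw [Finset.mem_Icc] at hk
          have hk0 : (0:ℝ) < k := by exact_mod_cast hk.1
          have hfloor_le : ((n / k : ℕ) : ℝ) ≤ (n : ℝ) / k := Nat.cast_div_le
          have hlt : (n : ℝ) / k < ((n / k : ℕ) : ℝ) + 1 := by
            rw [div_lt_iff₀ hk0]
            have := Nat.lt_mul_div_succ n (show 0 < k from hk.1)
            calc (n:ℝ) < (k * (n / k + 1) : ℕ) := by exact_mod_cast this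
              _ = ((n / k : ℕ) + 1) * k := by push_cast; ring
          rw [abs_mul]
          by_cases h1 : k = 1
          · subst h1
            simp
          · simp only [h1, if_false]
            have hμ : |(moebius k : ℝ)| ≤ 1 := by
              have := abs_moebius_le_one (n := k)
              exact_mod_cast this
            have habs : |(n : ℝ) / k - ((n / k : ℕ) : ℝ)| ≤ 1 := by
              rw [abs_le]; constructor <;> nlinarith
            nlinarith [abs_nonneg ((n : ℝ) / k - ((n / k : ℕ) : ℝ)), abs_nonneg ((moebius k : ℝ))]
      _ = (n : ℝ) - 1 := by
          rw [Finset.sum_sub_distrib, Finset.sum_const,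
            Finset.sum_ite_eq' (Finset.Icc 1 n) 1 (fun _ => (1:ℝ))]
          simp [hn, Nat.card_Icc]
  have hnpos : (0:ℝ) < n := by exact_mod_cast hn
  have h1 : (n : ℝ) * S ≤ n := by linarith [(abs_le.mp hbound).2]
  have h2 : -(n : ℝ) ≤ (n : ℝ) * S := by linarith [(abs_le.mp hbound).1]
  rw [abs_le]
  constructor
  · nlinarith
  · nlinarith
end

section
/- If lim_{x→∞} (1/log x) · ∑_{k=1}^{⌊x⌋} μ(k)·log(k)/k = 0, then lim_{x→∞} ∑_{k=1}^{⌊x⌋} μ(k)/k = 0. -/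
open Filter Finset ArithmeticFunction
open scoped ArithmeticFunction.Moebius ArithmeticFunction.zeta

private lemma swap_sum' (f : ℕ → ℕ → ℝ) (N : ℕ) :
    ∑ n ∈ Icc 1 N, ∑ d ∈ n.divisors, f d (n / d)
      = ∑ d ∈ Icc 1 N, ∑ m ∈ Icc 1 (N / d), f d m := by
  rw [Finset.sum_sigma', Finset.sum_sigma']
  refine Finset.sum_nbij' (fun p => ⟨p.2, p.1 / p.2⟩) (fun p => ⟨p.1 * p.2, p.1⟩) ?_ ?_ ?_ ?_ ?_
  · rintro ⟨n, d⟩ hp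
    simp only [Finset.mem_sigma, Finset.mem_Icc, Nat.mem_divisors] at hp ⊢
    obtain ⟨⟨h1, h2⟩, hd, hn0⟩ := hp
    have hd1 : 1 ≤ d := Nat.pos_of_dvd_of_pos hd (by omega)
    refine ⟨⟨hd1, le_trans (Nat.le_of_dvd (by omega) hd) h2⟩, ?_, Nat.div_le_div_right h2⟩
    exact Nat.one_le_div_iff (by omega) |>.mpr (Nat.le_of_dvd (by omega) hd)
  · rintro ⟨d, m⟩ hp
    simp only [Finset.mem_sigma, Finset.mem_Icc, Nat.mem_divisors] at hp ⊢
    obtain ⟨⟨h1, h2⟩, hm1, hm2⟩ := hp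
    have : d * m ≤ N := by
      rw [mul_comm]; exact (Nat.le_div_iff_mul_le (by omega : 0 < d)).mp hm2
    exact ⟨⟨Nat.one_le_iff_ne_zero.mpr (Nat.mul_ne_zero (by omega) (by omega)), this⟩,
      dvd_mul_right d m, Nat.mul_ne_zero (by omega) (by omega)⟩
  · rintro ⟨n, d⟩ hp
    simp only [Finset.mem_sigma, Finset.mem_Icc, Nat.mem_divisors] at hp
    obtain ⟨⟨h1, h2⟩, hd, hn0⟩ := hp
    simp [Nat.mul_div_cancel' hd]
  · rintro ⟨d, m⟩ hp
    simp only [Finset.mem_sigma, Finset.mem_Icc, Nat.mem_divisors] at hp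
    obtain ⟨⟨h1, h2⟩, hm1, hm2⟩ := hp
    simp [Nat.mul_div_cancel_left m (by omega : 0 < d)]
  · rintro ⟨n, d⟩ hp
    simp only [Finset.mem_sigma, Finset.mem_Icc, Nat.mem_divisors] at hp
    obtain ⟨⟨h1, h2⟩, hd, hn0⟩ := hp
    simp [Nat.div_mul_cancel hd]

private lemma moebius_divisor_sum (n : ℕ) :
    ∑ d ∈ n.divisors, ((moebius d : ℤ) : ℝ) = if n = 1 then 1 else 0 := by
  have h : ((μ * ζ : ArithmeticFunction ℤ) n : ℝ) = ∑ d ∈ n.divisors, ((moebius d : ℤ) : ℝ) := by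
    rw [coe_mul_zeta_apply]; push_cast; ring
  rw [← h, moebius_mul_coe_zeta]
  rcases eq_or_ne n 1 with rfl | hn <;> simp [one_apply, *]


private lemma sum_moebius_floor (N : ℕ) (hN : 1 ≤ N) :
    ∑ d ∈ Icc 1 N, ((moebius d : ℤ) : ℝ) * (N / d : ℕ) = 1 := by
  have := swap_sum' (fun d _ => ((moebius d : ℤ) : ℝ)) N
  simp only [Finset.sum_const, nsmul_eq_mul, Nat.card_Icc] at this
  have lhs : ∑ n ∈ Icc 1 N, ∑ _d ∈ n.divisors, ((moebius _d : ℤ) : ℝ) = 1 := by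
    rw [Finset.sum_congr rfl (fun n _ => moebius_divisor_sum n)]
    rw [Finset.sum_ite_eq' (Icc 1 N) 1 (fun _ => (1:ℝ))]
    simp [hN]
  rw [lhs] at this
  rw [this]
  exact Finset.sum_congr rfl (fun d hd => by rw [Nat.add_sub_cancel, mul_comm])

private lemma sum_moebius_harmonic (N : ℕ) (hN : 1 ≤ N) :
    ∑ d ∈ Icc 1 N, ((moebius d : ℤ) : ℝ) / d * (∑ m ∈ Icc 1 (N / d), (m : ℝ)⁻¹) = 1 := by
  have key := swap_sum' (fun d m => ((moebius d : ℤ) : ℝ) / (d * m)) N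
  have lhs : ∑ n ∈ Icc 1 N, ∑ d ∈ n.divisors, ((moebius d : ℤ) : ℝ) / (d * (n / d : ℕ)) = 1 := by
    have e1 : ∀ n ∈ Icc 1 N, ∑ d ∈ n.divisors, ((moebius d : ℤ) : ℝ) / (d * (n / d : ℕ))
        = (∑ d ∈ n.divisors, ((moebius d : ℤ) : ℝ)) / n := by
      intro n hn
      rw [Finset.sum_div]
      refine Finset.sum_congr rfl (fun d hd => ?_)
      rw [Nat.mem_divisors] at hd
      have : (d : ℝ) * (n / d : ℕ) = n := by
        rw [← Nat.cast_mul, Nat.mul_div_cancel' hd.1]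
      rw [this]
    rw [Finset.sum_congr rfl e1]
    rw [Finset.sum_congr rfl (fun n hn => by rw [moebius_divisor_sum n])]
    rw [Finset.sum_congr rfl (fun n (hn : n ∈ Icc 1 N) => by
      rcases eq_or_ne n 1 with rfl | h
      · norm_num
      · simp [h] : ∀ n ∈ Icc 1 N, (if n = 1 then (1:ℝ) else 0) / n = if n = 1 then 1 else 0)]
    rw [Finset.sum_ite_eq' (Icc 1 N) 1 (fun _ => (1:ℝ))]
    simp [hN]
  rw [lhs] at key
  rw [key]
  refine Finset.sum_congr rfl (fun d hd => ?_)
  rw [Finset.mul_sum]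
  refine Finset.sum_congr rfl (fun m hm => ?_)
  rw [← div_div, div_eq_mul_inv (_ / _)]
private lemma g_bound (x : ℝ) (hx : 1 ≤ x) :
    |∑ k ∈ Icc 1 ⌊x⌋₊, ((moebius k : ℤ) : ℝ) / k| ≤ 1 := by
  set N := ⌊x⌋₊ with hNdef
  have hN1 : 1 ≤ N := Nat.le_floor (by exact_mod_cast hx)
  have hNx : (N : ℝ) ≤ x := Nat.floor_le (by linarith)
  have hx0 : (0:ℝ) < x := by linarith
  have hfloor : ∀ k : ℕ, 1 ≤ k → ((N / k : ℕ) : ℝ) ≤ x / k ∧ x / k < (N / k : ℕ) + 1 := by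
    intro k hk
    have hk0 : (0:ℝ) < k := by exact_mod_cast hk
    have : (N / k : ℕ) = ⌊x / k⌋₊ := (Nat.floor_div_natCast x k).symm
    rw [this]
    exact ⟨Nat.floor_le (by positivity), Nat.lt_floor_add_one _⟩
  have key : x * ∑ k ∈ Icc 1 N, ((moebius k : ℤ) : ℝ) / k
      = 1 + ∑ k ∈ Icc 1 N, ((moebius k : ℤ) : ℝ) * (x / k - (N / k : ℕ)) := by
    rw [Finset.mul_sum, ← sum_moebius_floor N hN1, ← Finset.sum_add_distrib]
    exact Finset.sum_congr rfl fun k hk => by ring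
  have habs : |∑ k ∈ Icc 1 N, ((moebius k : ℤ) : ℝ) * (x / k - (N / k : ℕ))| ≤ x - 1 := by
    calc |∑ k ∈ Icc 1 N, ((moebius k : ℤ) : ℝ) * (x / k - (N / k : ℕ))|
        ≤ ∑ k ∈ Icc 1 N, |((moebius k : ℤ) : ℝ) * (x / k - (N / k : ℕ))| :=
          Finset.abs_sum_le_sum_abs _ _
      _ ≤ ∑ k ∈ Icc 1 N, (if k = 1 then x - N else 1) := by
          refine Finset.sum_le_sum fun k hk => ?_
          rw [Finset.mem_Icc] at hk
          have h1 := (hfloor k hk.1).1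
          have h2 := (hfloor k hk.1).2
          have hmu : |((moebius k : ℤ) : ℝ)| ≤ 1 := by
            exact_mod_cast (abs_moebius_le_one (n := k))
          have hterm : |((moebius k : ℤ) : ℝ) * (x / k - (N / k : ℕ))|
              ≤ |x / k - (N / k : ℕ)| := by
            rw [abs_mul]
            nlinarith [abs_nonneg (x / k - ((N / k : ℕ):ℝ))]
          rcases eq_or_ne k 1 with rfl | hk1
          · simp only [if_pos rfl]
            refine hterm.trans ?_
            rw [abs_of_nonneg (by linarith)]
            simp only [Nat.div_one, Nat.cast_one, div_one]
            simp
          · rw [if_neg hk1]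
            refine hterm.trans ?_
            rw [abs_of_nonneg (by linarith)]
            linarith
      _ = x - 1 := by
          have : ∀ k ∈ Icc 1 N, (if k = 1 then x - (N:ℝ) else 1)
              = (if k = 1 then x - N - 1 else 0) + 1 := by
            intro k _; rcases eq_or_ne k 1 with rfl | h <;> simp [*]
          rw [Finset.sum_congr rfl this, Finset.sum_add_distrib, Finset.sum_ite_eq' (Icc 1 N) 1
            (fun _ => x - (N:ℝ) - 1)]
          simp only [Finset.mem_Icc, Finset.sum_const, nsmul_eq_mul, mul_one, Nat.card_Icc]
          rw [if_pos ⟨le_refl 1, hN1⟩]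
          push_cast [Nat.add_sub_cancel]
          ring
  obtain ⟨hR1, hR2⟩ := abs_le.mp habs
  set S := ∑ k ∈ Icc 1 N, ((moebius k : ℤ) : ℝ) / k with hS
  have h1 : x * S ≤ x := by linarith
  have h2 : -x ≤ x * S := by linarith
  rw [abs_le]
  constructor
  · nlinarith
  · nlinarith

private lemma harm_gamma (n : ℕ) (hn : 1 ≤ n) :
    |(∑ m ∈ Icc 1 n, (m:ℝ)⁻¹) - Real.log n - Real.eulerMascheroniConstant| ≤ 1 / n := by
  have hH : (∑ m ∈ Icc 1 n, (m:ℝ)⁻¹) = ((harmonic n : ℚ) : ℝ) := by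
    rw [harmonic_eq_sum_Icc]
    push_cast
    rfl
  have h1 := Real.eulerMascheroniConstant_lt_eulerMascheroniSeq' n
  have h2 := Real.eulerMascheroniSeq_lt_eulerMascheroniConstant n
  rw [Real.eulerMascheroniSeq'] at h1
  rw [Real.eulerMascheroniSeq] at h2
  rw [if_neg (by omega : n ≠ 0)] at h1
  have hn0 : (0:ℝ) < n := by exact_mod_cast hn
  have hlog : Real.log (n+1) - Real.log n ≤ 1 / n := by
    rw [← Real.log_div (by positivity) (by positivity)]
    have := Real.log_le_sub_one_of_pos (show (0:ℝ) < (n+1)/n by positivity)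
    have : Real.log ((n+1)/n) ≤ (n+1)/n - 1 := this
    have heq : ((n:ℝ)+1)/n - 1 = 1/n := by field_simp; ring
    linarith
  rw [hH, abs_le]
  constructor <;> push_cast at h1 h2 ⊢ <;> linarith

private lemma E_bound (x : ℝ) (hx : 1 ≤ x) :
    |Real.log x * (∑ k ∈ Icc 1 ⌊x⌋₊, ((moebius k : ℤ) : ℝ) / k)
      - ∑ k ∈ Icc 1 ⌊x⌋₊, ((moebius k : ℤ) : ℝ) * Real.log k / k| ≤ 6 := by
  set N := ⌊x⌋₊ with hNdef
  have hN1 : 1 ≤ N := Nat.le_floor (by exact_mod_cast hx)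
  have hNx : (N : ℝ) ≤ x := Nat.floor_le (by linarith)
  have hx0 : (0:ℝ) < x := by linarith
  have hγdef : True := trivial
  have hγ0 : 0 < Real.eulerMascheroniConstant := lt_trans (by norm_num) Real.one_half_lt_eulerMascheroniConstant
  have hγ1 : Real.eulerMascheroniConstant ≤ 1 := le_of_lt (lt_trans Real.eulerMascheroniConstant_lt_two_thirds (by norm_num))
  -- rewrite E as sum of mu k / k * log (x/k)
  have hE : Real.log x * (∑ k ∈ Icc 1 N, ((moebius k : ℤ) : ℝ) / k)
      - ∑ k ∈ Icc 1 N, ((moebius k : ℤ) : ℝ) * Real.log k / k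
      = ∑ k ∈ Icc 1 N, ((moebius k : ℤ) : ℝ) / k * Real.log (x / k) := by
    rw [Finset.mul_sum, ← Finset.sum_sub_distrib]
    refine Finset.sum_congr rfl fun k hk => ?_
    rw [Finset.mem_Icc] at hk
    have hk0 : (0:ℝ) < k := by exact_mod_cast hk.1
    rw [Real.log_div (by positivity) (by positivity)]
    ring
  rw [hE]
  -- decompose log(x/k)
  have hdecomp : ∑ k ∈ Icc 1 N, ((moebius k : ℤ) : ℝ) / k * Real.log (x / k)
      = (∑ k ∈ Icc 1 N, ((moebius k : ℤ) : ℝ) / k * (∑ m ∈ Icc 1 (N / k), (m:ℝ)⁻¹))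
        - Real.eulerMascheroniConstant * (∑ k ∈ Icc 1 N, ((moebius k : ℤ) : ℝ) / k)
        - ∑ k ∈ Icc 1 N, ((moebius k : ℤ) : ℝ) / k *
            ((∑ m ∈ Icc 1 (N / k), (m:ℝ)⁻¹) - Real.log (x / k) - Real.eulerMascheroniConstant) := by
    rw [Finset.mul_sum, ← Finset.sum_sub_distrib, ← Finset.sum_sub_distrib]
    exact Finset.sum_congr rfl fun k hk => by ring
  rw [hdecomp, sum_moebius_harmonic N hN1]
  -- bound the epsilon sum
  have heps : |∑ k ∈ Icc 1 N, ((moebius k : ℤ) : ℝ) / k *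
      ((∑ m ∈ Icc 1 (N / k), (m:ℝ)⁻¹) - Real.log (x / k) - Real.eulerMascheroniConstant)| ≤ 4 := by
    calc |∑ k ∈ Icc 1 N, ((moebius k : ℤ) : ℝ) / k *
        ((∑ m ∈ Icc 1 (N / k), (m:ℝ)⁻¹) - Real.log (x / k) - Real.eulerMascheroniConstant)|
        ≤ ∑ k ∈ Icc 1 N, |((moebius k : ℤ) : ℝ) / k *
          ((∑ m ∈ Icc 1 (N / k), (m:ℝ)⁻¹) - Real.log (x / k) - Real.eulerMascheroniConstant)| :=
          Finset.abs_sum_le_sum_abs _ _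
      _ ≤ ∑ k ∈ Icc 1 N, 4 / x := by
          refine Finset.sum_le_sum fun k hk => ?_
          rw [Finset.mem_Icc] at hk
          have hk0 : (0:ℝ) < k := by exact_mod_cast hk.1
          set n := N / k with hn
          have hn1 : 1 ≤ n := Nat.one_le_div_iff (by omega) |>.mpr hk.2
          have hn0 : (0:ℝ) < n := by exact_mod_cast hn1
          -- floor relation : n = ⌊x / k⌋₊
          have hfl : n = ⌊x / k⌋₊ := by rw [hn, Nat.floor_div_natCast x k, hNdef]
          have hle : (n:ℝ) ≤ x / k := hfl ▸ Nat.floor_le (by positivity)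
          have hlt : x / k < (n:ℝ) + 1 := by
            rw [hfl]; exact_mod_cast Nat.lt_floor_add_one (x / k)
          -- |eps_k| ≤ 2 / n
          have hlog1 : Real.log n ≤ Real.log (x / k) := Real.log_le_log (by positivity) hle
          have hlog2 : Real.log (x / k) ≤ Real.log n + 1 / n := by
            have h1 : Real.log (x / k) ≤ Real.log ((n:ℝ) + 1) :=
              Real.log_le_log (by positivity) (le_of_lt hlt)
            have h2 : Real.log ((n:ℝ)+1) - Real.log n ≤ 1 / n := by
              rw [← Real.log_div (by positivity) (by positivity)]
              have := Real.log_le_sub_one_of_pos (show (0:ℝ) < ((n:ℝ)+1)/n by positivity)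
              have heq : ((n:ℝ)+1)/n - 1 = 1/n := by field_simp; ring
              linarith
            linarith
          have hg := harm_gamma n hn1
          have habs2 : |(∑ m ∈ Icc 1 n, (m:ℝ)⁻¹) - Real.log (x / k) - Real.eulerMascheroniConstant| ≤ 2 / n := by
            rw [abs_le] at hg ⊢
            have hsplit : 2 / (n:ℝ) = 1/(n:ℝ) + 1/(n:ℝ) := by ring
            constructor <;> [linarith [hg.1]; linarith [hg.2]]
          -- 2 / n ≤ 4 k / x  i.e. |eps| / k ≤ 4 / x ... combine with |mu| ≤ 1
          have hmu : |((moebius k : ℤ) : ℝ)| ≤ 1 := by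
            exact_mod_cast (abs_moebius_le_one (n := k))
          have hn1' : (1:ℝ) ≤ n := by exact_mod_cast hn1
          have hx2nk : x < 2 * n * k := by
            have : x / k < 2 * n := by linarith
            calc x = (x / k) * k := by field_simp
              _ < (2 * n) * k := by exact mul_lt_mul_of_pos_right this hk0
              _ = 2 * n * k := by ring
          have h2n : 2 / (n:ℝ) ≤ 4 * k / x := by
            rw [div_le_div_iff₀ (by positivity) hx0]
            nlinarith
          rw [abs_mul, abs_div, abs_of_nonneg (le_of_lt hk0)]
          have hε4 : |(∑ m ∈ Icc 1 n, (m:ℝ)⁻¹) - Real.log (x / k) - Real.eulerMascheroniConstant|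
              ≤ 4 * k / x := le_trans habs2 h2n
          calc |((moebius k : ℤ) : ℝ)| / k *
              |(∑ m ∈ Icc 1 n, (m:ℝ)⁻¹) - Real.log (x / k) - Real.eulerMascheroniConstant|
              ≤ 1 / k * (4 * k / x) := by
                apply mul_le_mul _ hε4 (abs_nonneg _) (by positivity)
                gcongr
            _ = 4 / x := by field_simp
      _ = 4 * N / x := by rw [Finset.sum_const, Nat.card_Icc, Nat.add_sub_cancel]; push_cast; ring
      _ ≤ 4 := by rw [div_le_iff₀ hx0]; nlinarith
  have hgb := g_bound x hx
  rw [← hNdef] at hgb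
  rw [abs_le] at hgb heps ⊢
  constructor <;> nlinarith [hγ0, hγ1, hgb.1, hgb.2, heps.1, heps.2]

theorem moebius_sum_tendsto_zero_of_log_weighted
    (h : Tendsto (fun x : ℝ =>
        (1 / Real.log x) *
          ∑ k ∈ Finset.Icc 1 ⌊x⌋₊, (ArithmeticFunction.moebius k : ℝ) * Real.log k / k)
        atTop (nhds 0)) :
    Tendsto (fun x : ℝ => ∑ k ∈ Finset.Icc 1 ⌊x⌋₊, (ArithmeticFunction.moebius k : ℝ) / k)
      atTop (nhds 0) := by
  have hlog6 : Tendsto (fun x : ℝ => 6 / Real.log x) atTop (nhds 0) := by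
    simpa [div_eq_mul_inv] using (Real.tendsto_log_atTop.inv_tendsto_atTop).const_mul (6:ℝ)
  have h2 : Tendsto (fun x : ℝ =>
      (Real.log x * (∑ k ∈ Icc 1 ⌊x⌋₊, ((moebius k : ℤ) : ℝ) / k)
        - ∑ k ∈ Icc 1 ⌊x⌋₊, ((moebius k : ℤ) : ℝ) * Real.log k / k) / Real.log x)
      atTop (nhds 0) := by
    apply squeeze_zero_norm' _ hlog6
    filter_upwards [eventually_ge_atTop (3:ℝ)] with x hx
    have hlx : 1 ≤ Real.log x := by
      rw [Real.le_log_iff_exp_le (by linarith)]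
      have := Real.exp_one_lt_d9
      linarith
    rw [Real.norm_eq_abs, abs_div, abs_of_nonneg (by linarith : (0:ℝ) ≤ Real.log x)]
    have hE := E_bound x (by linarith)
    exact div_le_div_of_nonneg_right hE (by linarith) |>.trans le_rfl
  have hsum := h.add h2
  rw [add_zero] at hsum
  refine hsum.congr' ?_
  filter_upwards [eventually_ge_atTop (3:ℝ)] with x hx
  have hlx : 1 ≤ Real.log x := by
    rw [Real.le_log_iff_exp_le (by linarith)]
    have := Real.exp_one_lt_d9
    linarith
  have hne : Real.log x ≠ 0 := by linarith
  field_simp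
  ring
end

section
/- For all real x ≥ 1, |log x · ∑_{k ≤ x} μ(k)/k − ∑_{k ≤ x} μ(k)·log(k)/k| ≤ 3 + γ, where γ is Euler's constant. -/
open Finset ArithmeticFunction Real

private lemma sum_swap_divisors {M : Type*} [AddCommMonoid M] (N : ℕ) (f : ℕ → ℕ → M) :
    ∑ n ∈ Icc 1 N, ∑ d ∈ n.divisors, f d (n / d)
      = ∑ k ∈ Icc 1 N, ∑ m ∈ Icc 1 (N / k), f k m := by
  rw [Finset.sum_sigma', Finset.sum_sigma']
  refine Finset.sum_nbij' (fun p => ⟨p.2, p.1 / p.2⟩) (fun p => ⟨p.1 * p.2, p.1⟩) ?_ ?_ ?_ ?_ ?_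
  · rintro ⟨n, d⟩ hp
    simp only [Finset.mem_sigma, Finset.mem_Icc, Nat.mem_divisors] at hp ⊢
    obtain ⟨⟨h1n, hnN⟩, hdn, hn0⟩ := hp
    have hd1 : 1 ≤ d := Nat.one_le_iff_ne_zero.2 (fun h => hn0 (by
      subst h; exact Nat.eq_zero_of_zero_dvd hdn))
    refine ⟨⟨hd1, le_trans (Nat.le_of_dvd (by omega) hdn) hnN⟩,
      (Nat.one_le_div_iff (by omega)).2 (Nat.le_of_dvd (by omega) hdn), Nat.div_le_div_right hnN⟩
  · rintro ⟨k, m⟩ hp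
    simp only [Finset.mem_sigma, Finset.mem_Icc, Nat.mem_divisors] at hp ⊢
    obtain ⟨⟨h1k, hkN⟩, h1m, hmN⟩ := hp
    have hkm : k * m ≤ N := by
      rw [mul_comm]; exact (Nat.le_div_iff_mul_le (by omega)).1 hmN
    exact ⟨⟨Nat.one_le_iff_ne_zero.2 (by positivity), hkm⟩, ⟨m, rfl⟩, by positivity⟩
  · rintro ⟨n, d⟩ hp
    simp only [Finset.mem_sigma, Finset.mem_Icc, Nat.mem_divisors] at hp
    obtain ⟨⟨h1n, hnN⟩, hdn, hn0⟩ := hp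
    simp [Nat.mul_div_cancel' hdn]
  · rintro ⟨k, m⟩ hp
    simp only [Finset.mem_sigma, Finset.mem_Icc, Nat.mem_divisors] at hp
    obtain ⟨⟨h1k, hkN⟩, h1m, hmN⟩ := hp
    simp [Nat.mul_div_cancel_left _ (by omega : 0 < k)]
  · rintro ⟨n, d⟩ _; rfl

private lemma sum_moebius_divisors (n : ℕ) (hn : n ≠ 0) :
    ∑ d ∈ n.divisors, (moebius d : ℤ) = if n = 1 then 1 else 0 := by
  have h := congrArg (fun f : ArithmeticFunction ℤ => f n) moebius_mul_coe_zeta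
  simp only [coe_mul_zeta_apply, one_apply] at h
  exact h

private lemma mertens_nat (N : ℕ) (hN : 1 ≤ N) :
    ∑ k ∈ Icc 1 N, (moebius k : ℤ) * (N / k : ℕ) = 1 := by
  have h := sum_swap_divisors (M := ℤ) N (fun k _ => (moebius k : ℤ))
  have hL : ∑ n ∈ Icc 1 N, ∑ d ∈ n.divisors, (moebius d : ℤ) = 1 := by
    rw [Finset.sum_congr rfl (fun n hn => sum_moebius_divisors n
      (by simp only [Finset.mem_Icc] at hn; omega)),
      Finset.sum_ite_eq' (Icc 1 N) 1 (fun _ => (1:ℤ))]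
    simp [hN]
  calc ∑ k ∈ Icc 1 N, (moebius k : ℤ) * (N / k : ℕ)
      = ∑ k ∈ Icc 1 N, ∑ _m ∈ Icc 1 (N / k), (moebius k : ℤ) := by
        refine Finset.sum_congr rfl (fun k _ => ?_)
        rw [Finset.sum_const, nsmul_eq_mul, mul_comm]
        simp
    _ = 1 := h.symm.trans hL

private lemma harmonic_identity (N : ℕ) (hN : 1 ≤ N) :
    ∑ k ∈ Icc 1 N, (moebius k : ℝ) / k * (harmonic (N / k) : ℝ) = 1 := by
  have h := sum_swap_divisors (M := ℝ) N (fun k m => (moebius k : ℝ) / (k * m))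
  calc ∑ k ∈ Icc 1 N, (moebius k : ℝ) / k * (harmonic (N / k) : ℝ)
      = ∑ k ∈ Icc 1 N, ∑ m ∈ Icc 1 (N / k), (moebius k : ℝ) / (k * m) := by
        refine Finset.sum_congr rfl (fun k hk => ?_)
        simp only [Finset.mem_Icc] at hk
        rw [harmonic_eq_sum_Icc]
        push_cast
        rw [Finset.mul_sum]
        refine Finset.sum_congr rfl (fun m hm => ?_)
        simp only [Finset.mem_Icc] at hm
        have hk0 : (k:ℝ) ≠ 0 := Nat.cast_ne_zero.mpr (by omega)
        have hm0 : (m:ℝ) ≠ 0 := Nat.cast_ne_zero.mpr (by omega)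
        field_simp
    _ = ∑ n ∈ Icc 1 N, ∑ d ∈ n.divisors, (moebius d : ℝ) / (d * ((n / d : ℕ) : ℝ)) := h.symm
    _ = 1 := by
        have step : ∀ n ∈ Icc 1 N, ∑ d ∈ n.divisors, (moebius d : ℝ) / (d * ((n / d : ℕ) : ℝ))
            = if n = 1 then 1 else 0 := by
          intro n hn
          simp only [Finset.mem_Icc] at hn
          have hn0 : n ≠ 0 := by omega
          have hterm : ∀ d ∈ n.divisors,
              (moebius d : ℝ) / (d * ((n / d : ℕ) : ℝ)) = (moebius d : ℝ) / n := by
            intro d hd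
            rw [Nat.mem_divisors] at hd
            rw [← Nat.cast_mul, Nat.mul_div_cancel' hd.1]
          rw [Finset.sum_congr rfl hterm, ← Finset.sum_div]
          have hcast : ∑ d ∈ n.divisors, (moebius d : ℝ) = if n = 1 then 1 else 0 := by
            have := sum_moebius_divisors n hn0
            split_ifs at this ⊢ with h1
            · exact_mod_cast this
            · exact_mod_cast this
          rw [hcast]
          split_ifs with h1
          · simp [h1]
          · simp
        rw [Finset.sum_congr rfl step, Finset.sum_ite_eq' (Icc 1 N) 1 (fun _ => (1:ℝ))]
        simp [hN]

private lemma abs_moebius_real_le_one (k : ℕ) : |(moebius k : ℝ)| ≤ 1 := by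
  have h := abs_moebius_le_one (n := k)
  calc |(moebius k : ℝ)| = ((|moebius k| : ℤ) : ℝ) := by push_cast; ring
    _ ≤ 1 := by exact_mod_cast h

private lemma abs_sum_moebius_div_le_one_s7 (N : ℕ) (hN : 1 ≤ N) :
    |∑ k ∈ Icc 1 N, (moebius k : ℝ) / k| ≤ 1 := by
  set S : ℝ := ∑ k ∈ Icc 1 N, (moebius k : ℝ) / k with hS
  have key : (N : ℝ) * S - 1 = ∑ k ∈ Icc 1 N, (moebius k : ℝ) * ((N : ℝ) / k - ((N / k : ℕ) : ℝ)) := by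
    have h1 : (1 : ℝ) = ∑ k ∈ Icc 1 N, (moebius k : ℝ) * ((N / k : ℕ) : ℝ) := by
      have := mertens_nat N hN
      have h2 : ((1 : ℤ) : ℝ) = ((∑ k ∈ Icc 1 N, (moebius k : ℤ) * (N / k : ℕ) : ℤ) : ℝ) := by
        exact_mod_cast congrArg (fun z : ℤ => (z : ℝ)) this.symm
      push_cast at h2
      simpa only [Int.cast_one, Int.cast_sum, Int.cast_mul, Int.cast_natCast] using congrArg (fun z : ℤ => (z : ℝ)) this.symm
    rw [hS, Finset.mul_sum]
    rw [h1]
    rw [← Finset.sum_sub_distrib]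
    refine Finset.sum_congr rfl (fun k hk => ?_)
    simp only [Finset.mem_Icc] at hk
    have hk0 : (0:ℝ) < k := by exact_mod_cast hk.1
    field_simp
  have hterm : ∀ k ∈ Icc 1 N, |(moebius k : ℝ) * ((N : ℝ) / k - ((N / k : ℕ) : ℝ))|
      ≤ if k = 1 then 0 else 1 := by
    intro k hk
    simp only [Finset.mem_Icc] at hk
    have hk0 : (0:ℝ) < k := by exact_mod_cast hk.1
    have hfrac0 : (0:ℝ) ≤ (N : ℝ) / k - ((N / k : ℕ) : ℝ) := by
      rw [sub_nonneg, le_div_iff₀ hk0]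
      exact_mod_cast Nat.div_mul_le_self N k
    have hfrac1 : (N : ℝ) / k - ((N / k : ℕ) : ℝ) ≤ 1 := by
      rw [sub_le_iff_le_add, div_le_iff₀ hk0, add_mul, one_mul]
      have h3 : N ≤ k + N / k * k := by
        have h4 := Nat.div_add_mod N k
        have h5 := Nat.mod_lt N (show 0 < k by omega)
        have h6 : k * (N / k) = N / k * k := Nat.mul_comm _ _
        omega
      exact_mod_cast h3
    split_ifs with h1
    · subst h1
      simp
    · rw [abs_mul]
      calc |(moebius k : ℝ)| * |(N : ℝ) / k - ((N / k : ℕ) : ℝ)|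
          ≤ 1 * 1 := by
            apply mul_le_mul (abs_moebius_real_le_one k) _ (abs_nonneg _) zero_le_one
            rw [abs_of_nonneg hfrac0]; exact hfrac1
        _ = 1 := one_mul 1
  have hsum : |(N : ℝ) * S - 1| ≤ (N : ℝ) - 1 := by
    rw [key]
    calc |∑ k ∈ Icc 1 N, (moebius k : ℝ) * ((N : ℝ) / k - ((N / k : ℕ) : ℝ))|
        ≤ ∑ k ∈ Icc 1 N, |(moebius k : ℝ) * ((N : ℝ) / k - ((N / k : ℕ) : ℝ))| :=
          Finset.abs_sum_le_sum_abs _ _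
      _ ≤ ∑ k ∈ Icc 1 N, (if k = 1 then (0:ℝ) else 1) := Finset.sum_le_sum hterm
      _ = (N : ℝ) - 1 := by
          have he : ∀ k, (if k = 1 then (0:ℝ) else 1) = 1 - (if k = 1 then (1:ℝ) else 0) := by
            intro k; split_ifs <;> ring
          simp_rw [he]
          rw [Finset.sum_sub_distrib, Finset.sum_const, Finset.sum_ite_eq' (Icc 1 N) 1 (fun _ => (1:ℝ))]
          simp [hN, Nat.card_Icc]
  have hN0 : (0:ℝ) < N := by exact_mod_cast hN
  have habs : |(N:ℝ) * S| ≤ N := by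
    have e : (N:ℝ) * S = ((N:ℝ) * S - 1) + 1 := by ring
    rw [e]
    calc |((N:ℝ) * S - 1) + 1| ≤ |(N:ℝ) * S - 1| + |(1:ℝ)| := abs_add_le _ _
      _ ≤ ((N:ℝ) - 1) + 1 := by rw [abs_one]; linarith
      _ = N := by ring
  rw [abs_mul, abs_of_pos hN0] at habs
  have h1 : (N:ℝ) * |S| ≤ (N:ℝ) * 1 := by linarith
  exact le_of_mul_le_mul_left h1 hN0

private lemma eps_bound (t : ℝ) (ht : 1 ≤ t) :
    |Real.log t + Real.eulerMascheroniConstant - (harmonic ⌊t⌋₊ : ℝ)| ≤ 2 / t := by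
  set m : ℕ := ⌊t⌋₊ with hm
  have hm1 : 1 ≤ m := Nat.le_floor (by exact_mod_cast ht)
  have hm0 : (0:ℝ) < m := by exact_mod_cast hm1
  have hmle : (m : ℝ) ≤ t := Nat.floor_le (by linarith)
  have hlt : t < (m : ℝ) + 1 := Nat.lt_floor_add_one t
  -- upper bound on harmonic m - log m - γ
  have hupper : (harmonic m : ℝ) - Real.log m - Real.eulerMascheroniConstant < 1 / m := by
    have h := Real.eulerMascheroniSeq_lt_eulerMascheroniConstant (m - 1)
    rw [Real.eulerMascheroniSeq] at h
    have hsub : ((m : ℕ) - 1 : ℕ) + 1 = m := by omega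
    have hharm : (harmonic m : ℝ) = (harmonic (m - 1) : ℝ) + 1 / m := by
      have hh := harmonic_succ (m - 1)
      rw [hsub] at hh
      rw [hh]
      push_cast [hsub]
      ring
    have hcast : (((m : ℕ) - 1 : ℕ) : ℝ) + 1 = (m : ℝ) := by
      exact_mod_cast congrArg (fun n : ℕ => (n : ℝ)) hsub
    rw [hcast] at h
    linarith
  have hlower : 0 < (harmonic m : ℝ) - Real.log m - Real.eulerMascheroniConstant := by
    have h := Real.eulerMascheroniConstant_lt_eulerMascheroniSeq' m
    rw [Real.eulerMascheroniSeq'] at h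
    simp only [Nat.one_le_iff_ne_zero.1 hm1, if_false] at h
    linarith
  have hlog0 : 0 ≤ Real.log t - Real.log m := by
    have := Real.log_le_log (by positivity) hmle
    linarith
  have hlog1 : Real.log t - Real.log m ≤ 1 / m := by
    have hdiv : Real.log t - Real.log m = Real.log (t / m) := by
      rw [Real.log_div (by linarith) (ne_of_gt hm0)]
    rw [hdiv]
    have h1 : Real.log (t / m) ≤ t / m - 1 := by
      have := Real.log_le_sub_one_of_pos (show (0:ℝ) < t / m by positivity)
      linarith
    have h2 : t / m - 1 ≤ 1 / m := by
      rw [div_sub' (ne_of_gt hm0), div_le_div_iff₀ hm0 hm0]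
      nlinarith
    linarith
  have habs : |Real.log t + Real.eulerMascheroniConstant - (harmonic m : ℝ)| ≤ 1 / m := by
    rw [abs_le]
    constructor <;> linarith
  have hfin : 1 / (m:ℝ) ≤ 2 / t := by
    rw [div_le_div_iff₀ hm0 (by linarith : (0:ℝ) < t)]
    have hm1' : (1:ℝ) ≤ m := by exact_mod_cast hm1
    linarith
  linarith [habs, hfin]

theorem vonMangoldt_inequality (x : ℝ) (hx : 1 ≤ x) :
    |Real.log x * ∑ k ∈ Finset.Icc 1 ⌊x⌋₊, (ArithmeticFunction.moebius k : ℝ) / k -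
        ∑ k ∈ Finset.Icc 1 ⌊x⌋₊, (ArithmeticFunction.moebius k : ℝ) * Real.log k / k| ≤
      3 + Real.eulerMascheroniConstant := by
  set N : ℕ := ⌊x⌋₊ with hNdef
  have hN : 1 ≤ N := Nat.le_floor (by exact_mod_cast hx)
  have hNx : (N : ℝ) ≤ x := Nat.floor_le (by linarith)
  have hx0 : (0:ℝ) < x := by linarith
  set γ : ℝ := Real.eulerMascheroniConstant with hγ
  have hγ0 : 0 ≤ γ := le_of_lt (lt_trans (by norm_num) Real.one_half_lt_eulerMascheroniConstant)
  set S : ℝ := ∑ k ∈ Icc 1 N, (moebius k : ℝ) / k with hS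
  -- rewrite the difference as a single sum
  have hsplit : Real.log x * S - ∑ k ∈ Icc 1 N, (moebius k : ℝ) * Real.log k / k
      = ∑ k ∈ Icc 1 N, (moebius k : ℝ) / k * Real.log (x / k) := by
    rw [hS, Finset.mul_sum, ← Finset.sum_sub_distrib]
    refine Finset.sum_congr rfl (fun k hk => ?_)
    simp only [Finset.mem_Icc] at hk
    have hk0 : (0:ℝ) < k := by exact_mod_cast hk.1
    rw [Real.log_div (ne_of_gt hx0) (ne_of_gt hk0)]
    field_simp
  -- decompose each log term
  have hdecomp : ∀ k ∈ Icc 1 N, (moebius k : ℝ) / k * Real.log (x / k)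
      = (moebius k : ℝ) / k * (harmonic (N / k) : ℝ) - γ * ((moebius k : ℝ) / k)
        + (moebius k : ℝ) / k * (Real.log (x / k) + γ - (harmonic (N / k) : ℝ)) := by
    intro k hk
    ring
  have hfloor : ∀ k ∈ Icc 1 N, ⌊x / (k:ℝ)⌋₊ = N / k := by
    intro k hk
    rw [hNdef]
    exact_mod_cast Nat.floor_div_natCast x k
  have hEbound : ∀ k ∈ Icc 1 N,
      |(moebius k : ℝ) / k * (Real.log (x / k) + γ - (harmonic (N / k) : ℝ))| ≤ 2 / x := by
    intro k hk
    simp only [Finset.mem_Icc] at hk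
    have hk0 : (0:ℝ) < k := by exact_mod_cast hk.1
    have hkN : (k:ℝ) ≤ N := by exact_mod_cast hk.2
    have ht1 : 1 ≤ x / k := by
      rw [le_div_iff₀ hk0, one_mul]; linarith
    have heps := eps_bound (x / k) ht1
    rw [hfloor k (by simp only [Finset.mem_Icc]; exact hk)] at heps
    have h1 : |(moebius k : ℝ) / k| ≤ 1 / k := by
      rw [abs_div, abs_of_pos hk0]
      gcongr
      exact abs_moebius_real_le_one k
    calc |(moebius k : ℝ) / k * (Real.log (x / k) + γ - (harmonic (N / k) : ℝ))|
        = |(moebius k : ℝ) / k| * |Real.log (x / k) + γ - (harmonic (N / k) : ℝ)| := abs_mul _ _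
      _ ≤ (1 / k) * (2 / (x / k)) := by
          apply mul_le_mul h1 heps (abs_nonneg _) (by positivity)
      _ = 2 / x := by
          rw [div_div_eq_mul_div]
          field_simp
  -- total error bound
  have hE : |∑ k ∈ Icc 1 N, (moebius k : ℝ) / k * (Real.log (x / k) + γ - (harmonic (N / k) : ℝ))|
      ≤ 2 := by
    calc |∑ k ∈ Icc 1 N, (moebius k : ℝ) / k * (Real.log (x / k) + γ - (harmonic (N / k) : ℝ))|
        ≤ ∑ k ∈ Icc 1 N, |(moebius k : ℝ) / k * (Real.log (x / k) + γ - (harmonic (N / k) : ℝ))| :=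
          Finset.abs_sum_le_sum_abs _ _
      _ ≤ ∑ _k ∈ Icc 1 N, 2 / x := Finset.sum_le_sum hEbound
      _ = (N : ℝ) * (2 / x) := by
          rw [Finset.sum_const, nsmul_eq_mul, Nat.card_Icc]
          simp
      _ ≤ x * (2 / x) := by
          apply mul_le_mul_of_nonneg_right hNx (by positivity)
      _ = 2 := by field_simp
  have hid := harmonic_identity N hN
  have hSb := abs_sum_moebius_div_le_one_s7 N hN
  rw [hsplit, Finset.sum_congr rfl hdecomp, Finset.sum_add_distrib, Finset.sum_sub_distrib,
    ← Finset.mul_sum, hid, ← hS]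
  have hgS : |γ * S| ≤ γ := by
    rw [abs_mul, abs_of_nonneg hγ0]
    nlinarith
  calc |1 - γ * S + ∑ k ∈ Icc 1 N, (moebius k : ℝ) / k * (Real.log (x / k) + γ - (harmonic (N / k) : ℝ))|
      ≤ |1 - γ * S| + |∑ k ∈ Icc 1 N, (moebius k : ℝ) / k * (Real.log (x / k) + γ - (harmonic (N / k) : ℝ))| :=
        abs_add_le _ _
    _ ≤ (1 + γ) + 2 := by
        have : |1 - γ * S| ≤ 1 + γ := by
          calc |1 - γ * S| ≤ |(1:ℝ)| + |γ * S| := abs_sub _ _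
            _ ≤ 1 + γ := by rw [abs_one]; linarith
        linarith
    _ = 3 + γ := by ring
end

section
/- For every real x ≥ 1, ∑_{k=1}^{⌊x⌋} μ(k)·log(k)/k = −∑_{p ≤ x} log p · ∑_{i ≥ 1} (1/pⁱ) · g(x/pⁱ), where the outer sum ranges over primes p ≤ x and g(y) = ∑_{k ≤ y} μ(k)/k (g(y)=0 for y<1). -/
noncomputable def g (y : ℝ) : ℝ :=
  ∑ k ∈ Finset.Icc 1 ⌊y⌋₊, (ArithmeticFunction.moebius k : ℝ) / k

open Finset ArithmeticFunction ArithmeticFunction.Moebius in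
/-- Pointwise Möbius inversion of `∑ d ∣ n, μ d * log d = -Λ n`. -/
lemma moebius_mul_log_eq_neg_sum (n : ℕ) (hn : 0 < n) :
    (μ n : ℝ) * Real.log n =
      ∑ ab ∈ n.divisorsAntidiagonal, (μ ab.1 : ℝ) * (-Λ ab.2) := by
  have h := (sum_eq_iff_sum_mul_moebius_eq (R := ℝ)
      (f := fun i => (μ i : ℝ) * Real.log i) (g := fun m => -Λ m)).mp
      (fun m _ => sum_moebius_mul_log_eq) n hn
  exact h.symm

open Finset in
/-- Hyperbola swap for sums over divisor antidiagonals. -/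
lemma sum_divisorsAntidiagonal_swap (N : ℕ) (F : ℕ → ℕ → ℝ) :
    ∑ k ∈ Icc 1 N, ∑ ab ∈ k.divisorsAntidiagonal, F ab.1 ab.2
      = ∑ b ∈ Icc 1 N, ∑ a ∈ Icc 1 (N / b), F a b := by
  rw [Finset.sum_sigma', Finset.sum_sigma']
  refine Finset.sum_nbij' (i := fun x => ⟨x.2.2, x.2.1⟩)
    (j := fun x => ⟨x.2 * x.1, (x.2, x.1)⟩) ?_ ?_ ?_ ?_ ?_
  · rintro ⟨k, a, b⟩ hk
    simp only [mem_sigma, mem_Icc, Nat.mem_divisorsAntidiagonal] at hk ⊢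
    obtain ⟨⟨hk1, hkN⟩, hab, hk0⟩ := hk
    have ha : 0 < a := Nat.pos_of_ne_zero (by rintro rfl; rw [zero_mul] at hab; omega)
    have hb : 0 < b := Nat.pos_of_ne_zero (by rintro rfl; rw [mul_zero] at hab; omega)
    refine ⟨⟨hb, ?_⟩, ha, ?_⟩
    · calc b ≤ a * b := Nat.le_mul_of_pos_left b ha
        _ = k := hab
        _ ≤ N := hkN
    · rw [Nat.le_div_iff_mul_le hb, hab]; exact hkN
  · rintro ⟨b, a⟩ hb
    simp only [mem_sigma, mem_Icc, Nat.mem_divisorsAntidiagonal] at hb ⊢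
    obtain ⟨⟨hb1, hbN⟩, ha1, haN⟩ := hb
    rw [Nat.le_div_iff_mul_le (by omega)] at haN
    exact ⟨⟨Nat.one_le_iff_ne_zero.mpr (Nat.mul_ne_zero (by omega) (by omega)), haN⟩,
      trivial, Nat.mul_ne_zero (by omega) (by omega)⟩
  · rintro ⟨k, a, b⟩ hk
    simp only [mem_sigma, mem_Icc, Nat.mem_divisorsAntidiagonal] at hk
    obtain ⟨_, hab, _⟩ := hk
    simp [hab]
  · rintro ⟨b, a⟩ _; rfl
  · rintro ⟨k, a, b⟩ _; rfl

open Finset ArithmeticFunction ArithmeticFunction.Moebius in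
theorem moebius_log_sum_eq (x : ℝ) (hx : 1 ≤ x) :
    ∑ k ∈ Finset.Icc 1 ⌊x⌋₊, (ArithmeticFunction.moebius k : ℝ) * Real.log k / k =
      -∑ p ∈ Finset.filter Nat.Prime (Finset.Icc 1 ⌊x⌋₊),
        Real.log p * ∑' i : ℕ, (1 / (p : ℝ) ^ (i + 1)) * g (x / (p : ℝ) ^ (i + 1)) := by
  classical
  set N := ⌊x⌋₊ with hNdef
  have hx0 : 0 < x := lt_of_lt_of_le one_pos hx
  have hN1 : 1 ≤ N := Nat.le_floor (by exact_mod_cast hx)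
  -- g at x / b for natural b ≥ 1
  have hg : ∀ b : ℕ, g (x / (b : ℝ)) = ∑ a ∈ Icc 1 (N / b), (μ a : ℝ) / a := by
    intro b
    rw [g, Nat.floor_div_natCast]
  -- Step 1: pointwise convolution identity and expansion
  have step1 : ∑ k ∈ Icc 1 N, (μ k : ℝ) * Real.log k / k
      = ∑ k ∈ Icc 1 N, ∑ ab ∈ k.divisorsAntidiagonal,
          (-((μ ab.1 : ℝ) / ab.1 * (Λ ab.2 / ab.2))) := by
    refine Finset.sum_congr rfl fun k hk => ?_
    rw [mem_Icc] at hk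
    rw [moebius_mul_log_eq_neg_sum k (by omega), Finset.sum_div]
    refine Finset.sum_congr rfl fun ab hab => ?_
    rw [Nat.mem_divisorsAntidiagonal] at hab
    obtain ⟨habk, hk0⟩ := hab
    have ha : 0 < ab.1 := Nat.pos_of_ne_zero (by intro h; rw [h, zero_mul] at habk; omega)
    have hb : 0 < ab.2 := Nat.pos_of_ne_zero (by intro h; rw [h, mul_zero] at habk; omega)
    have ha' : (ab.1 : ℝ) ≠ 0 := Nat.cast_ne_zero.mpr (by omega)
    have hb' : (ab.2 : ℝ) ≠ 0 := Nat.cast_ne_zero.mpr (by omega)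
    rw [← habk]
    push_cast
    field_simp
  rw [step1, sum_divisorsAntidiagonal_swap N (fun a b => -((μ a : ℝ) / a * (Λ b / b)))]
  -- Step 2: factor out g(x/b)
  have step2 : ∀ b ∈ Icc 1 N, ∑ a ∈ Icc 1 (N / b), (-((μ a : ℝ) / a * (Λ b / b)))
      = -(Λ b / (b : ℝ) * g (x / (b : ℝ))) := by
    intro b _
    rw [hg b, Finset.mul_sum, ← Finset.sum_neg_distrib]
    exact Finset.sum_congr rfl fun a _ => by ring
  rw [Finset.sum_congr rfl step2, Finset.sum_neg_distrib, neg_inj]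
  -- Step 3: restrict to prime powers
  have hfilter : ∀ b ∈ Icc 1 N, Λ b / (b : ℝ) * g (x / (b : ℝ)) ≠ 0 → IsPrimePow b := by
    intro b _ hne
    by_contra hc
    exact hne (by rw [vonMangoldt_eq_zero_iff.mpr hc, zero_div, zero_mul])
  rw [← Finset.sum_filter_of_ne hfilter]
  -- Step 4: bijection with pairs (prime, exponent)
  have step4 : ∑ b ∈ (Icc 1 N).filter IsPrimePow, Λ b / (b : ℝ) * g (x / (b : ℝ))
      = ∑ p ∈ (Icc 1 N).filter Nat.Prime,
          ∑ i ∈ (Finset.range N).filter (fun i => p ^ (i + 1) ≤ N),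
            Λ (p ^ (i + 1)) / ((p ^ (i + 1) : ℕ) : ℝ) * g (x / ((p ^ (i + 1) : ℕ) : ℝ)) := by
    rw [Finset.sum_sigma']
    symm
    refine Finset.sum_nbij' (i := fun pk => pk.1 ^ (pk.2 + 1))
      (j := fun b => ⟨b.minFac, b.factorization b.minFac - 1⟩) ?_ ?_ ?_ ?_ ?_
    · rintro ⟨p, i⟩ hpi
      simp only [mem_sigma, mem_filter, mem_Icc, mem_range] at hpi ⊢
      obtain ⟨⟨⟨hp1, hpN⟩, hp⟩, hi, hpow⟩ := hpi
      exact ⟨⟨Nat.one_le_iff_ne_zero.mpr (pow_ne_zero _ hp.pos.ne'), hpow⟩,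
        ⟨p, i + 1, hp.prime, i.add_one_pos, rfl⟩⟩
    · rintro b hb
      simp only [mem_sigma, mem_filter, mem_Icc, mem_range] at hb ⊢
      obtain ⟨⟨hb1, hbN⟩, hpp⟩ := hb
      have hp : b.minFac.Prime := Nat.minFac_prime hpp.ne_one
      have hk0 : b.factorization b.minFac ≠ 0 := Nat.factorization_minFac_ne_zero hpp.one_lt
      have hbk : b.minFac ^ (b.factorization b.minFac) = b :=
        hpp.minFac_pow_factorization_eq
      have hkN : b.factorization b.minFac < N := by
        have h2 : 2 ≤ b.minFac := hp.two_le
        calc b.factorization b.minFac < 2 ^ (b.factorization b.minFac) :=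
              Nat.lt_two_pow_self
          _ ≤ b.minFac ^ (b.factorization b.minFac) :=
              Nat.pow_le_pow_left h2 _
          _ = b := hbk
          _ ≤ N := hbN
      refine ⟨⟨⟨hp.one_lt.le, le_trans (Nat.minFac_le (by omega)) hbN⟩, hp⟩, by omega, ?_⟩
      rw [Nat.sub_add_cancel (Nat.one_le_iff_ne_zero.mpr hk0), hbk]
      exact hbN
    · rintro ⟨p, i⟩ hpi
      simp only [mem_sigma, mem_filter, mem_Icc, mem_range] at hpi
      obtain ⟨⟨_, hp⟩, _, _⟩ := hpi
      have h1 : (p ^ (i + 1)).minFac = p := hp.pow_minFac i.succ_ne_zero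
      simp [h1, hp.factorization_pow]
    · rintro b hb
      simp only [mem_filter, mem_Icc] at hb
      obtain ⟨⟨hb1, hbN⟩, hpp⟩ := hb
      simp only
      rw [Nat.sub_add_cancel (Nat.one_le_iff_ne_zero.mpr (Nat.factorization_minFac_ne_zero hpp.one_lt)),
        hpp.minFac_pow_factorization_eq]
    · rintro ⟨p, i⟩ _; rfl
  rw [step4]
  -- Step 5: identify inner sums with the tsums
  refine Finset.sum_congr rfl fun p hp => ?_
  simp only [mem_filter, mem_Icc] at hp
  obtain ⟨⟨hp1, hpN⟩, hprime⟩ := hp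
  have hp2 : 2 ≤ p := hprime.two_le
  have hpR : (0 : ℝ) < (p : ℝ) := by positivity
  have hzero : ∀ i ∉ (Finset.range N).filter (fun i => p ^ (i + 1) ≤ N),
      (1 / (p : ℝ) ^ (i + 1)) * g (x / (p : ℝ) ^ (i + 1)) = 0 := by
    intro i hi
    simp only [mem_filter, mem_range, not_and] at hi
    have hbig : N < p ^ (i + 1) := by
      by_contra hc
      push_neg at hc
      have hiN : i < N := by
        calc i < 2 ^ i := Nat.lt_two_pow_self (n := i)
          _ ≤ 2 ^ (i + 1) := Nat.pow_le_pow_right (by omega) (by omega)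
          _ ≤ p ^ (i + 1) := Nat.pow_le_pow_left hp2 _
          _ ≤ N := hc
      exact absurd hc (hi hiN)
    have hfl : ⌊x / (p : ℝ) ^ (i + 1)⌋₊ = 0 := by
      have : ((p : ℝ) ^ (i + 1)) = ((p ^ (i + 1) : ℕ) : ℝ) := by push_cast; ring
      rw [this, Nat.floor_div_natCast, Nat.div_eq_of_lt hbig]
    rw [g, hfl]
    simp
  rw [tsum_eq_sum hzero, Finset.mul_sum]
  refine Finset.sum_congr rfl fun i hi => ?_
  simp only [mem_filter, mem_range] at hi
  have hΛ : Λ (p ^ (i + 1)) = Real.log p := by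
    rw [vonMangoldt_apply_pow i.succ_ne_zero, vonMangoldt_apply_prime hprime]
  have hcast : ((p ^ (i + 1) : ℕ) : ℝ) = (p : ℝ) ^ (i + 1) := by push_cast; ring
  rw [hΛ, hcast]
  ring
end

section
/- For all x > 0, the Chebyshev function θ(x) = ∑_{p ≤ x} log p satisfies θ(x) < 2x. -/
theorem chebyshev_lt_two_mul (x : ℝ) (hx : 0 < x) :
    ∑ p ∈ Finset.filter Nat.Prime (Finset.Icc 1 ⌊x⌋₊), Real.log p < 2 * x := by
  set n := ⌊x⌋₊ with hn
  have hset : Finset.filter Nat.Prime (Finset.Icc 1 n)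
      = Finset.filter Nat.Prime (Finset.range (n + 1)) := by
    ext p
    simp only [Finset.mem_filter, Finset.mem_Icc, Finset.mem_range]
    constructor
    · rintro ⟨⟨_, h2⟩, hp⟩; exact ⟨Nat.lt_succ_of_le h2, hp⟩
    · rintro ⟨h1, hp⟩; exact ⟨⟨hp.one_lt.le, Nat.lt_succ_iff.mp h1⟩, hp⟩
  rw [hset]
  have hsum : ∑ p ∈ Finset.filter Nat.Prime (Finset.range (n + 1)), Real.log p
      = Real.log (primorial n) := by
    rw [primorial, Nat.cast_prod, Real.log_prod]
    intro p hp
    simp only [Finset.mem_filter] at hp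
    exact_mod_cast hp.2.pos.ne'
  rw [hsum]
  have h4 : (primorial n : ℝ) ≤ 4 ^ n := by
    exact_mod_cast primorial_le_4_pow n
  have hlog : Real.log (primorial n) ≤ n * Real.log 4 := by
    calc Real.log (primorial n) ≤ Real.log (4 ^ n) :=
          Real.log_le_log (by exact_mod_cast (primorial_pos n)) h4
      _ = n * Real.log 4 := by rw [Real.log_pow]
  have hlog4 : Real.log 4 < 2 := by
    rw [Real.log_lt_iff_lt_exp (by norm_num)]
    have h := Real.exp_one_gt_d9
    have : Real.exp 2 = Real.exp 1 * Real.exp 1 := by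
      rw [← Real.exp_add]; norm_num
    nlinarith [Real.exp_pos 1]
  have hnx : (n : ℝ) ≤ x := Nat.floor_le hx.le
  rcases Nat.eq_zero_or_pos n with h0 | hpos
  · rw [h0] at hlog ⊢
    simp at hlog
    have hp0 : primorial 0 = 1 := by decide
    rw [hp0, Nat.cast_one, Real.log_one]
    linarith
  · have hn1 : (1 : ℝ) ≤ n := by exact_mod_cast hpos
    have : (n : ℝ) * Real.log 4 < 2 * x := by
      have hl4pos : 0 < Real.log 4 := Real.log_pos (by norm_num)
      calc (n : ℝ) * Real.log 4 ≤ x * Real.log 4 := by nlinarith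
        _ < 2 * x := by nlinarith
    linarith
end

section
/- Assume θ(x)/x → 1 as x → ∞, where θ(x) = ∑_{p ≤ x} log p. Then H(x)/log x → 0 as x → ∞, where H(x) = ∑_{p ≤ x} (log p / p) · g(x/p), the sum being over primes p ≤ x, and g(y) = ∑_{k ≤ y} μ(k)/k (g(y) = 0 for y < 1). -/
open Filter Finset

noncomputable def theta (x : ℝ) : ℝ :=
  ∑ p ∈ Finset.filter Nat.Prime (Finset.Icc 1 ⌊x⌋₊), Real.log p

noncomputable def H (x : ℝ) : ℝ :=
  ∑ p ∈ Finset.filter Nat.Prime (Finset.Icc 1 ⌊x⌋₊), (Real.log p / p) * g (x / p)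

noncomputable def Mo (N : ℕ) : ℝ :=
  ∑ k ∈ Finset.Icc 1 N, (ArithmeticFunction.moebius k : ℝ) / k

lemma sum_Icc_div_eq (N : ℕ) (f : ℕ → ℕ → ℝ) :
    ∑ n ∈ Icc 1 N, ∑ k ∈ Icc 1 (N / n), f n k
      = ∑ m ∈ Icc 1 N, ∑ d ∈ m.divisors, f d (m / d) := by
  rw [Finset.sum_sigma', Finset.sum_sigma']
  refine Finset.sum_nbij' (fun p => ⟨p.1 * p.2, p.1⟩) (fun p => ⟨p.2, p.1 / p.2⟩) ?_ ?_ ?_ ?_ ?_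
  · rintro ⟨n, k⟩ hp
    simp only [Finset.mem_sigma, Finset.mem_Icc, Nat.mem_divisors] at hp ⊢
    obtain ⟨⟨hn1, hnN⟩, hk1, hkN⟩ := hp
    have hn0 : 0 < n := hn1
    have hnk : n * k ≤ N := by
      rw [Nat.le_div_iff_mul_le hn0] at hkN
      linarith [hkN, Nat.mul_comm k n]
    exact ⟨⟨Nat.one_le_iff_ne_zero.mpr (by positivity), hnk⟩, ⟨Dvd.intro k rfl, by positivity⟩⟩
  · rintro ⟨m, d⟩ hp
    simp only [Finset.mem_sigma, Finset.mem_Icc, Nat.mem_divisors] at hp ⊢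
    obtain ⟨⟨hm1, hmN⟩, hd, hm0⟩ := hp
    have hd0 : 0 < d := Nat.pos_of_dvd_of_pos hd (Nat.pos_of_ne_zero hm0)
    refine ⟨⟨hd0, (Nat.le_of_dvd (Nat.pos_of_ne_zero hm0) hd).trans hmN⟩, ?_, ?_⟩
    · exact Nat.one_le_div_iff hd0 |>.mpr (Nat.le_of_dvd (Nat.pos_of_ne_zero hm0) hd)
    · exact Nat.div_le_div_right hmN
  · rintro ⟨n, k⟩ hp
    simp only [Finset.mem_sigma, Finset.mem_Icc] at hp
    have hn0 : 0 < n := hp.1.1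
    simp [Nat.mul_div_cancel_left _ hn0]
  · rintro ⟨m, d⟩ hp
    simp only [Finset.mem_sigma, Finset.mem_Icc, Nat.mem_divisors] at hp
    obtain ⟨⟨hm1, hmN⟩, hd, hm0⟩ := hp
    simp [Nat.mul_div_cancel' hd]
  · rintro ⟨n, k⟩ hp
    simp only [Finset.mem_sigma, Finset.mem_Icc] at hp
    have hn0 : 0 < n := hp.1.1
    simp [Nat.mul_div_cancel_left _ hn0]

lemma sum_divisors_moebius (m : ℕ) (hm : m ≠ 0) :
    ∑ d ∈ m.divisors, ((ArithmeticFunction.moebius d : ℤ) : ℝ) = if m = 1 then 1 else 0 := by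
  have h := ArithmeticFunction.moebius_mul_coe_zeta
  have h2 : ((ArithmeticFunction.moebius * ArithmeticFunction.zeta :
      ArithmeticFunction ℤ)) m = (1 : ArithmeticFunction ℤ) m := by rw [h]
  rw [ArithmeticFunction.coe_mul_zeta_apply, ArithmeticFunction.one_apply] at h2
  calc ∑ d ∈ m.divisors, ((ArithmeticFunction.moebius d : ℤ) : ℝ)
      = ((∑ d ∈ m.divisors, ArithmeticFunction.moebius d : ℤ) : ℝ) := by push_cast; ring
    _ = ((if m = 1 then 1 else 0 : ℤ) : ℝ) := by rw [h2]
    _ = if m = 1 then 1 else 0 := by split <;> simp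

lemma identityA (N : ℕ) (hN : 1 ≤ N) :
    ∑ n ∈ Icc 1 N, Mo (N / n) / n = 1 := by
  have : ∑ n ∈ Icc 1 N, Mo (N / n) / n
      = ∑ n ∈ Icc 1 N, ∑ k ∈ Icc 1 (N / n),
          ((ArithmeticFunction.moebius k : ℤ) : ℝ) / k / n := by
    refine Finset.sum_congr rfl fun n hn => ?_
    rw [Mo, Finset.sum_div]
  rw [this, sum_Icc_div_eq N (fun n k => ((ArithmeticFunction.moebius k : ℤ) : ℝ) / k / n)]
  have key : ∀ m ∈ Icc 1 N,
      (∑ d ∈ m.divisors, ((ArithmeticFunction.moebius (m / d) : ℤ) : ℝ) / (m / d : ℕ) / d)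
        = if m = 1 then 1 else 0 := by
    intro m hm
    simp only [Finset.mem_Icc] at hm
    have hm0 : m ≠ 0 := by omega
    have step : ∀ d ∈ m.divisors,
        ((ArithmeticFunction.moebius (m / d) : ℤ) : ℝ) / (m / d : ℕ) / d
          = ((ArithmeticFunction.moebius (m / d) : ℤ) : ℝ) / m := by
      intro d hd
      rw [Nat.mem_divisors] at hd
      have : ((m / d : ℕ) : ℝ) * (d : ℝ) = (m : ℝ) := by
        rw [← Nat.cast_mul, Nat.div_mul_cancel hd.1]
      rw [div_div, this]
    rw [Finset.sum_congr rfl step, ← Finset.sum_div,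
      Nat.sum_div_divisors m (fun d => ((ArithmeticFunction.moebius d : ℤ) : ℝ)),
      sum_divisors_moebius m hm0]
    split
    · next h => simp [h]
    · simp
  rw [Finset.sum_congr rfl key, Finset.sum_ite_eq' (Icc 1 N) 1 (fun _ => (1:ℝ))]
  simp [hN]

lemma identityB (N : ℕ) (hN : 1 ≤ N) :
    ∑ k ∈ Icc 1 N, ((ArithmeticFunction.moebius k : ℤ) : ℝ) * ((N / k : ℕ) : ℝ) = 1 := by
  have : ∀ k ∈ Icc 1 N, ((ArithmeticFunction.moebius k : ℤ) : ℝ) * ((N / k : ℕ) : ℝ)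
      = ∑ j ∈ Icc 1 (N / k), ((ArithmeticFunction.moebius k : ℤ) : ℝ) := by
    intro k hk
    rw [Finset.sum_const, Nat.card_Icc]
    simp [nsmul_eq_mul, mul_comm]
  rw [Finset.sum_congr rfl this,
    sum_Icc_div_eq N (fun n _ => ((ArithmeticFunction.moebius n : ℤ) : ℝ))]
  have key : ∀ m ∈ Icc 1 N,
      (∑ d ∈ m.divisors, ((ArithmeticFunction.moebius d : ℤ) : ℝ)) = if m = 1 then 1 else 0 := by
    intro m hm
    simp only [Finset.mem_Icc] at hm
    exact sum_divisors_moebius m (by omega)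
  rw [Finset.sum_congr rfl key, Finset.sum_ite_eq' (Icc 1 N) 1 (fun _ => (1:ℝ))]
  simp [hN]

lemma abs_Mo_le_one (N : ℕ) : |Mo N| ≤ 1 := by
  rcases Nat.eq_zero_or_pos N with h0 | hN
  · simp [Mo, h0]
  have key : (N : ℝ) * Mo N = 1 + ∑ k ∈ Icc 1 N,
      ((ArithmeticFunction.moebius k : ℤ) : ℝ) * ((N % k : ℕ) / k) := by
    have expand : (N : ℝ) * Mo N
        = ∑ k ∈ Icc 1 N, ((ArithmeticFunction.moebius k : ℤ) : ℝ) * ((N : ℝ) / k) := by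
      rw [Mo, Finset.mul_sum]
      refine Finset.sum_congr rfl fun k hk => ?_
      ring
    have split : ∀ k ∈ Icc 1 N, ((ArithmeticFunction.moebius k : ℤ) : ℝ) * ((N : ℝ) / k)
        = ((ArithmeticFunction.moebius k : ℤ) : ℝ) * ((N / k : ℕ) : ℝ)
          + ((ArithmeticFunction.moebius k : ℤ) : ℝ) * ((N % k : ℕ) / k) := by
      intro k hk
      simp only [Finset.mem_Icc] at hk
      have hk0 : (k : ℝ) ≠ 0 := Nat.cast_ne_zero.mpr (by omega)
      have : (N : ℝ) = ((N / k : ℕ) : ℝ) * k + ((N % k : ℕ) : ℝ) := by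
        exact_mod_cast (Nat.div_add_mod' N k).symm
      rw [this]
      field_simp
    rw [expand, Finset.sum_congr rfl split, Finset.sum_add_distrib, identityB N hN]
  have bound : |∑ k ∈ Icc 1 N,
      ((ArithmeticFunction.moebius k : ℤ) : ℝ) * ((N % k : ℕ) / k)| ≤ (N : ℝ) - 1 := by
    calc |∑ k ∈ Icc 1 N, ((ArithmeticFunction.moebius k : ℤ) : ℝ) * ((N % k : ℕ) / k)|
        ≤ ∑ k ∈ Icc 1 N, |((ArithmeticFunction.moebius k : ℤ) : ℝ) * ((N % k : ℕ) / k)| :=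
          Finset.abs_sum_le_sum_abs _ _
      _ ≤ ∑ k ∈ Icc 1 N, (if k = N then 0 else 1) := by
          refine Finset.sum_le_sum fun k hk => ?_
          simp only [Finset.mem_Icc] at hk
          split
          · next h => subst h; simp [Nat.mod_self]
          · next h =>
            rw [abs_mul]
            have h1 : |((ArithmeticFunction.moebius k : ℤ) : ℝ)| ≤ 1 := by
              have := ArithmeticFunction.abs_moebius_le_one (n := k)
              calc |((ArithmeticFunction.moebius k : ℤ) : ℝ)|
                  = ((|ArithmeticFunction.moebius k| : ℤ) : ℝ) := by push_cast; rfl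
                _ ≤ 1 := by exact_mod_cast this
            have h2 : |((N % k : ℕ) : ℝ) / k| ≤ 1 := by
              rw [abs_div, abs_of_nonneg (by positivity : (0:ℝ) ≤ ((N % k : ℕ) : ℝ)),
                abs_of_nonneg (by positivity : (0:ℝ) ≤ (k:ℝ))]
              apply div_le_one_of_le₀
              · exact_mod_cast (Nat.mod_lt N (by omega : 0 < k)).le
              · positivity
            calc |((ArithmeticFunction.moebius k : ℤ) : ℝ)| * |((N % k : ℕ) : ℝ) / k|
                ≤ 1 * 1 := by
                  apply mul_le_mul h1 h2 (abs_nonneg _) (by norm_num)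
              _ = 1 := by norm_num
      _ = (N : ℝ) - 1 := by
          have : ∀ k ∈ Icc 1 N, (if k = N then (0:ℝ) else 1) = 1 - (if k = N then 1 else 0) := by
            intro k _; split <;> norm_num
          rw [Finset.sum_congr rfl this, Finset.sum_sub_distrib,
            Finset.sum_ite_eq' (Icc 1 N) N (fun _ => (1:ℝ)), Finset.sum_const, Nat.card_Icc]
          have : N ≠ 0 := by omega
          simp [this]
  have hNpos : (0:ℝ) < N := by exact_mod_cast hN
  have : |(N : ℝ) * Mo N| ≤ N := by
    rw [key]
    calc |1 + ∑ k ∈ Icc 1 N, ((ArithmeticFunction.moebius k : ℤ) : ℝ) * ((N % k : ℕ) / k)|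
        ≤ 1 + |∑ k ∈ Icc 1 N, ((ArithmeticFunction.moebius k : ℤ) : ℝ) * ((N % k : ℕ) / k)| := by
          calc _ ≤ |(1:ℝ)| + _ := abs_add_le _ _
            _ = _ := by norm_num
      _ ≤ 1 + ((N : ℝ) - 1) := by linarith [bound]
      _ = N := by ring
  rw [abs_mul, abs_of_pos hNpos] at this
  calc |Mo N| = ((N:ℝ) * |Mo N|) / N := by field_simp
    _ ≤ (N:ℝ) / N := by gcongr
    _ = 1 := by field_simp

lemma abel_sum (T c : ℕ → ℝ) (hT0 : T 0 = 0) (N : ℕ) :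
    ∑ n ∈ Icc 1 N, (T n - T (n-1)) * c n
      = T N * c N + ∑ n ∈ Icc 1 (N-1), T n * (c n - c (n+1)) := by
  induction N with
  | zero => simp [hT0]
  | succ m ih =>
    rw [Finset.sum_Icc_succ_top (by omega : 1 ≤ m + 1), ih]
    rcases Nat.eq_zero_or_pos m with hm | hm
    · subst hm; simp [hT0]
    · have hm1 : m - 1 + 1 = m := by omega
      have : ∑ n ∈ Icc 1 (m + 1 - 1), T n * (c n - c (n+1))
          = ∑ n ∈ Icc 1 (m-1), T n * (c n - c (n+1)) + T m * (c m - c (m+1)) := by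
        have : m + 1 - 1 = (m - 1) + 1 := by omega
        rw [this, Finset.sum_Icc_succ_top (by omega : 1 ≤ m - 1 + 1), hm1]
      rw [this]
      simp only [Nat.add_sub_cancel]
      ring

noncomputable def thetaN (n : ℕ) : ℝ :=
  ∑ p ∈ Finset.filter Nat.Prime (Finset.Icc 1 n), Real.log p

lemma thetaN_step (n : ℕ) (hn : 1 ≤ n) :
    thetaN n - thetaN (n - 1) = if n.Prime then Real.log n else 0 := by
  obtain ⟨m, rfl⟩ : ∃ m, n = m + 1 := ⟨n - 1, by omega⟩
  simp only [Nat.add_sub_cancel, thetaN]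
  rw [Finset.sum_filter, Finset.sum_filter, Finset.sum_Icc_succ_top (by omega : 1 ≤ m + 1)]
  ring

lemma theta_eq_thetaN (n : ℕ) : theta (n : ℝ) = thetaN n := by
  simp [theta, thetaN, Nat.floor_natCast]

noncomputable def Hs (m : ℕ) : ℝ := ∑ k ∈ Icc 1 m, (1:ℝ)/k

lemma Icc_one_eq_Ioc_zero (m : ℕ) : Icc 1 m = Ioc 0 m := rfl

lemma sum_Ioc_split (f : ℕ → ℝ) (a b : ℕ) (hba : b ≤ a) :
    ∑ k ∈ Icc 1 a, f k - ∑ k ∈ Icc 1 b, f k = ∑ k ∈ Ioc b a, f k := by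
  rw [Icc_one_eq_Ioc_zero, Icc_one_eq_Ioc_zero,
    ← Finset.sum_Ioc_consecutive f (Nat.zero_le b) hba]
  ring

lemma Mo_diff_le (a b : ℕ) (hba : b ≤ a) : |Mo a - Mo b| ≤ Hs a - Hs b := by
  rw [Mo, Mo, sum_Ioc_split _ _ _ hba]
  rw [Hs, Hs, sum_Ioc_split _ _ _ hba]
  refine (Finset.abs_sum_le_sum_abs _ _).trans (Finset.sum_le_sum fun k hk => ?_)
  simp only [Finset.mem_Ioc] at hk
  rw [abs_div, abs_of_nonneg (by positivity : (0:ℝ) ≤ (k:ℝ))]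
  have hk0 : (0:ℝ) < k := by
    have : 0 < k := Nat.lt_of_le_of_lt (Nat.zero_le b) hk.1
    exact_mod_cast this
  have hmu : |((ArithmeticFunction.moebius k : ℤ) : ℝ)| ≤ 1 := by
    calc |((ArithmeticFunction.moebius k : ℤ) : ℝ)|
        = ((|ArithmeticFunction.moebius k| : ℤ) : ℝ) := by push_cast; rfl
      _ ≤ 1 := by exact_mod_cast ArithmeticFunction.abs_moebius_le_one
  gcongr

lemma Hs_mono : Monotone Hs := by
  intro a b hab
  rw [Hs, Hs]
  apply Finset.sum_le_sum_of_subset_of_nonneg (Finset.Icc_subset_Icc_right hab)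
  intro k _ _
  positivity

lemma variation (N : ℕ) (hN : 1 ≤ N) :
    ∑ n ∈ Icc 1 (N - 1), |Mo (N / n) - Mo (N / (n + 1))| ≤ Hs N := by
  have step : ∀ n ∈ Icc 1 (N - 1), |Mo (N / n) - Mo (N / (n + 1))|
      ≤ Hs (N / n) - Hs (N / (n + 1)) := by
    intro n hn
    simp only [Finset.mem_Icc] at hn
    exact Mo_diff_le _ _ (Nat.div_le_div_left (by omega) (by omega))
  refine (Finset.sum_le_sum step).trans ?_
  have hIcc : Icc 1 (N - 1) = Finset.Ico 1 N := by
    ext k; simp [Finset.mem_Icc, Finset.mem_Ico]; omega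
  have tel : ∑ n ∈ Icc 1 (N - 1), (Hs (N / n) - Hs (N / (n + 1)))
      = Hs N - Hs (N / N) := by
    rw [hIcc, Finset.sum_Ico_eq_sum_range]
    have := Finset.sum_range_sub' (fun i => Hs (N / (i + 1))) (N - 1)
    calc ∑ i ∈ Finset.range (N - 1), (Hs (N / (1 + i)) - Hs (N / (1 + i + 1)))
        = ∑ i ∈ Finset.range (N - 1), (Hs (N / (i + 1)) - Hs (N / (i + 1 + 1))) := by
          refine Finset.sum_congr rfl fun i _ => ?_
          rw [Nat.add_comm 1 i]
      _ = Hs (N / (0 + 1)) - Hs (N / (N - 1 + 1)) := this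
      _ = Hs N - Hs (N / N) := by
          have h1 : N - 1 + 1 = N := by omega
          rw [h1]
          norm_num
  rw [tel]
  have h1 : (0:ℝ) ≤ Hs (N / N) := by
    rw [Hs]
    apply Finset.sum_nonneg
    intro k _
    positivity
  linarith

lemma Hs_le (N : ℕ) (hN : 1 ≤ N) : Hs N ≤ 1 + Real.log N := by
  have h := harmonic_le_one_add_log N
  have : Hs N = ((harmonic N : ℚ) : ℝ) := by
    rw [Hs, harmonic_eq_sum_Icc]
    push_cast
    exact Finset.sum_congr rfl fun k _ => one_div _
  rw [this]
  exact_mod_cast h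

lemma H_sub_one (x : ℝ) (hx : 1 ≤ x) :
    H x - 1 = (thetaN ⌊x⌋₊ - (⌊x⌋₊ : ℝ)) * (Mo (⌊x⌋₊ / ⌊x⌋₊) / ⌊x⌋₊)
      + ∑ n ∈ Icc 1 (⌊x⌋₊ - 1), (thetaN n - (n : ℝ)) *
          (Mo (⌊x⌋₊ / n) / n - Mo (⌊x⌋₊ / (n + 1)) / (n + 1)) := by
  set N := ⌊x⌋₊ with hNdef
  have hN : 1 ≤ N := Nat.floor_pos.mpr hx
  set c : ℕ → ℝ := fun n => Mo (N / n) / n with hc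
  have h1 : H x = ∑ n ∈ Icc 1 N, (thetaN n - thetaN (n - 1)) * c n := by
    rw [H, Finset.sum_filter]
    refine Finset.sum_congr rfl fun n hn => ?_
    simp only [Finset.mem_Icc] at hn
    rw [thetaN_step n hn.1]
    have hg : g (x / n) = Mo (N / n) := by
      have : g (x / n) = Mo ⌊x / (n : ℝ)⌋₊ := rfl
      rw [this, Nat.floor_div_natCast x n]
    split
    · rw [hg]; simp only [hc]; ring
    · simp
  have h2 := abel_sum thetaN c (by simp [thetaN]) N
  have h3 := abel_sum (fun n => (n : ℝ)) c (by simp) N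
  have h4 : ∑ n ∈ Icc 1 N, ((n : ℝ) - ((n - 1 : ℕ) : ℝ)) * c n
      = ∑ n ∈ Icc 1 N, c n := by
    refine Finset.sum_congr rfl fun n hn => ?_
    simp only [Finset.mem_Icc] at hn
    rw [Nat.cast_sub hn.1]
    push_cast
    ring
  have h5 : ∑ n ∈ Icc 1 N, c n = 1 := identityA N hN
  have h6 : (1 : ℝ) = (N : ℝ) * c N + ∑ n ∈ Icc 1 (N - 1), (n : ℝ) * (c n - c (n + 1)) := by
    rw [← h5, ← h4, h3]
  have h7 : ∑ n ∈ Icc 1 (N - 1), thetaN n * (c n - c (n + 1))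
        - ∑ n ∈ Icc 1 (N - 1), (n : ℝ) * (c n - c (n + 1))
      = ∑ n ∈ Icc 1 (N - 1), (thetaN n - (n : ℝ)) * (c n - c (n + 1)) := by
    rw [← Finset.sum_sub_distrib]
    refine Finset.sum_congr rfl fun n _ => ?_
    ring
  have : H x - 1 = (thetaN N - (N : ℝ)) * c N
      + ∑ n ∈ Icc 1 (N - 1), (thetaN n - (n : ℝ)) * (c n - c (n + 1)) := by
    rw [h1, h2]
    rw [h6]
    rw [← h7]
    ring
  rw [this]
  congr 1
  refine Finset.sum_congr rfl fun n _ => ?_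
  simp only [hc]
  push_cast
  ring

lemma H_bound (x : ℝ) (hx : 1 ≤ x) (C ε' : ℝ) (hC : 0 ≤ C) (hε' : 0 ≤ ε') (N₀ : ℕ)
    (hE1 : ∀ n : ℕ, 1 ≤ n → |thetaN n - (n : ℝ)| ≤ C * n)
    (hE2 : ∀ n : ℕ, N₀ ≤ n → |thetaN n - (n : ℝ)| ≤ ε' * n) :
    |H x - 1| ≤ C + 2 * C * N₀ + 2 * ε' * Hs ⌊x⌋₊ := by
  set N := ⌊x⌋₊ with hNdef
  have hN : 1 ≤ N := Nat.floor_pos.mpr hx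
  rw [H_sub_one x hx]
  have hMo : ∀ m : ℕ, |Mo m| ≤ 1 := abs_Mo_le_one
  -- first term
  have first : |(thetaN N - (N : ℝ)) * (Mo (N / N) / N)| ≤ C := by
    rw [abs_mul, abs_div, abs_of_nonneg (by positivity : (0:ℝ) ≤ (N:ℝ))]
    have hNpos : (0:ℝ) < N := by exact_mod_cast hN
    calc |thetaN N - (N:ℝ)| * (|Mo (N / N)| / N)
        ≤ (C * N) * (1 / N) := by
          apply mul_le_mul (hE1 N hN) _ (by positivity) (by positivity)
          gcongr
          exact hMo _
      _ = C := by field_simp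
  -- pointwise bound on the sum
  have point : ∀ n ∈ Icc 1 (N - 1),
      |(thetaN n - (n : ℝ)) * (Mo (N / n) / n - Mo (N / (n + 1)) / (n + 1))|
        ≤ (if n < N₀ then 2 * C else 0)
          + ε' * (|Mo (N / n) - Mo (N / (n + 1))| + 1 / (n + 1)) := by
    intro n hn
    simp only [Finset.mem_Icc] at hn
    have hn1 : 1 ≤ n := hn.1
    have hnpos : (0:ℝ) < n := by exact_mod_cast hn1
    have hnpos1 : (0:ℝ) < (n:ℝ) + 1 := by positivity
    by_cases hcase : n < N₀
    · rw [if_pos hcase]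
      have hfac : |Mo (N / n) / n - Mo (N / (n + 1)) / (n + 1)| ≤ 2 / n := by
        calc |Mo (N / n) / n - Mo (N / (n + 1)) / (n + 1)|
            ≤ |Mo (N / n) / n| + |Mo (N / (n + 1)) / (n + 1)| := abs_sub _ _
          _ ≤ 1 / n + 1 / n := by
              apply add_le_add
              · rw [abs_div, abs_of_pos hnpos]
                gcongr; exact hMo _
              · rw [abs_div, abs_of_pos hnpos1]
                calc |Mo (N / (n+1))| / ((n:ℝ)+1) ≤ 1 / ((n:ℝ)+1) := by gcongr; exact hMo _
                  _ ≤ 1 / n := by gcongr <;> linarith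
          _ = 2 / n := by ring
      have : |(thetaN n - (n : ℝ)) * (Mo (N / n) / n - Mo (N / (n + 1)) / (n + 1))|
          ≤ (C * n) * (2 / n) := by
        rw [abs_mul]
        exact mul_le_mul (hE1 n hn1) hfac (abs_nonneg _) (by positivity)
      refine this.trans ?_
      have : (C * n) * (2 / n) = 2 * C := by field_simp
      rw [this]
      have : (0:ℝ) ≤ ε' * (|Mo (N / n) - Mo (N / (n + 1))| + 1 / (n + 1)) := by positivity
      linarith
    · rw [if_neg hcase]
      push_neg at hcase
      have hsplit : Mo (N / n) / n - Mo (N / (n + 1)) / (n + 1)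
          = (Mo (N / n) - Mo (N / (n + 1))) / n
            + Mo (N / (n + 1)) * (1 / (n * (n + 1))) := by
        field_simp
        ring
      have hfac : |Mo (N / n) / n - Mo (N / (n + 1)) / (n + 1)|
          ≤ |Mo (N / n) - Mo (N / (n + 1))| / n + 1 / (n * (n + 1)) := by
        rw [hsplit]
        refine (abs_add_le _ _).trans ?_
        apply add_le_add
        · rw [abs_div, abs_of_pos hnpos]
        · rw [abs_mul, abs_of_pos (by positivity : (0:ℝ) < 1 / ((n:ℝ) * (n + 1)))]
          calc |Mo (N / (n+1))| * (1 / ((n:ℝ) * (n+1))) ≤ 1 * (1 / ((n:ℝ) * (n+1))) := by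
                gcongr; exact hMo _
            _ = 1 / ((n:ℝ) * (n+1)) := by ring
      calc |(thetaN n - (n : ℝ)) * (Mo (N / n) / n - Mo (N / (n + 1)) / (n + 1))|
          ≤ (ε' * n) * (|Mo (N / n) - Mo (N / (n + 1))| / n + 1 / (n * (n + 1))) := by
            rw [abs_mul]
            exact mul_le_mul (hE2 n hcase) hfac (abs_nonneg _) (by positivity)
        _ = ε' * (|Mo (N / n) - Mo (N / (n + 1))| + 1 / (n + 1)) := by
            field_simp
        _ ≤ 0 + ε' * (|Mo (N / n) - Mo (N / (n + 1))| + 1 / (n + 1)) := by linarith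
  -- sum the pointwise bound
  have sum_bound : ∑ n ∈ Icc 1 (N - 1),
      |(thetaN n - (n : ℝ)) * (Mo (N / n) / n - Mo (N / (n + 1)) / (n + 1))|
        ≤ 2 * C * N₀ + 2 * ε' * Hs N := by
    refine (Finset.sum_le_sum point).trans ?_
    rw [Finset.sum_add_distrib]
    have part1 : ∑ n ∈ Icc 1 (N - 1), (if n < N₀ then 2 * C else 0) ≤ 2 * C * N₀ := by
      rw [← Finset.sum_filter]
      rw [Finset.sum_const, nsmul_eq_mul]
      have hcard : ((Icc 1 (N - 1)).filter (· < N₀)).card ≤ N₀ := by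
        have hsub : (Icc 1 (N - 1)).filter (· < N₀) ⊆ Icc 1 N₀ := by
          intro k hk
          simp only [Finset.mem_filter, Finset.mem_Icc] at hk ⊢
          omega
        calc _ ≤ (Icc 1 N₀).card := Finset.card_le_card hsub
          _ = N₀ := by rw [Nat.card_Icc]; omega
      calc (((Icc 1 (N - 1)).filter (· < N₀)).card : ℝ) * (2 * C)
          ≤ (N₀ : ℝ) * (2 * C) := by
            apply mul_le_mul_of_nonneg_right _ (by positivity)
            exact_mod_cast hcard
        _ = 2 * C * N₀ := by ring
    have part2 : ∑ n ∈ Icc 1 (N - 1),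
        ε' * (|Mo (N / n) - Mo (N / (n + 1))| + 1 / (n + 1)) ≤ 2 * ε' * Hs N := by
      have expand : ∑ n ∈ Icc 1 (N - 1),
          ε' * (|Mo (N / n) - Mo (N / (n + 1))| + 1 / (n + 1))
            = ε' * ((∑ n ∈ Icc 1 (N - 1), |Mo (N / n) - Mo (N / (n + 1))|)
              + ∑ n ∈ Icc 1 (N - 1), 1 / ((n:ℝ) + 1)) := by
        simp only [mul_add, Finset.mul_sum, Finset.sum_add_distrib]
      rw [expand]
      have hv := variation N hN
      have hh : ∑ n ∈ Icc 1 (N - 1), 1 / ((n:ℝ) + 1) ≤ Hs N := by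
        have : ∀ n ∈ Icc 1 (N - 1), 1 / ((n:ℝ) + 1) ≤ 1 / n := by
          intro n hn
          simp only [Finset.mem_Icc] at hn
          have : (0:ℝ) < n := by exact_mod_cast hn.1
          gcongr <;> linarith
        refine (Finset.sum_le_sum this).trans ?_
        exact (le_of_eq rfl).trans (Hs_mono (by omega : N - 1 ≤ N))
      calc ε' * ((∑ n ∈ Icc 1 (N - 1), |Mo (N / n) - Mo (N / (n + 1))|)
            + ∑ n ∈ Icc 1 (N - 1), 1 / ((n:ℝ) + 1))
          ≤ ε' * (Hs N + Hs N) := by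
            apply mul_le_mul_of_nonneg_left _ hε'
            exact add_le_add hv hh
        _ = 2 * ε' * Hs N := by ring
    linarith
  calc |(thetaN N - (N : ℝ)) * (Mo (N / N) / N)
        + ∑ n ∈ Icc 1 (N - 1), (thetaN n - (n : ℝ)) *
            (Mo (N / n) / n - Mo (N / (n + 1)) / (n + 1))|
      ≤ |(thetaN N - (N : ℝ)) * (Mo (N / N) / N)|
        + |∑ n ∈ Icc 1 (N - 1), (thetaN n - (n : ℝ)) *
            (Mo (N / n) / n - Mo (N / (n + 1)) / (n + 1))| := abs_add_le _ _
    _ ≤ C + (2 * C * N₀ + 2 * ε' * Hs N) := by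
        apply add_le_add first
        exact (Finset.abs_sum_le_sum_abs _ _).trans sum_bound
    _ = C + 2 * C * N₀ + 2 * ε' * Hs N := by ring

theorem H_div_log_tendsto_zero
    (hθ : Tendsto (fun x : ℝ => theta x / x) atTop (nhds 1)) :
    Tendsto (fun x : ℝ => H x / Real.log x) atTop (nhds 0) := by
  rw [Metric.tendsto_atTop]
  intro ε hε
  have hθn : Tendsto (fun n : ℕ => theta (n : ℝ) / (n : ℝ)) atTop (nhds 1) :=
    hθ.comp tendsto_natCast_atTop_atTop
  have key : ∀ δ : ℝ, 0 < δ → ∃ N₀ : ℕ, 1 ≤ N₀ ∧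
      ∀ n : ℕ, N₀ ≤ n → |thetaN n - (n : ℝ)| ≤ δ * n := by
    intro δ hδ
    obtain ⟨N₁, hN₁⟩ := (Metric.tendsto_atTop.mp hθn) δ hδ
    refine ⟨max N₁ 1, le_max_right _ _, fun n hn => ?_⟩
    have hn1 : 1 ≤ n := le_trans (le_max_right _ _) hn
    have h := hN₁ n (le_trans (le_max_left _ _) hn)
    rw [Real.dist_eq] at h
    have hnpos : (0:ℝ) < n := by exact_mod_cast hn1
    have heq : thetaN n - (n : ℝ) = (theta (n : ℝ) / n - 1) * n := by
      rw [← theta_eq_thetaN]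
      field_simp
    rw [heq, abs_mul, abs_of_pos hnpos]
    exact mul_le_mul_of_nonneg_right h.le hnpos.le
  obtain ⟨N₁, hN₁1, hN₁⟩ := key 1 one_pos
  set C : ℝ := 1 + ∑ n ∈ Finset.range N₁, |thetaN n - (n : ℝ)| with hCdef
  have hsum_nonneg : (0:ℝ) ≤ ∑ n ∈ Finset.range N₁, |thetaN n - (n : ℝ)| :=
    Finset.sum_nonneg fun _ _ => abs_nonneg _
  have hC1 : 1 ≤ C := by simp only [hCdef]; linarith
  have hC0 : 0 ≤ C := by linarith
  have hE1 : ∀ n : ℕ, 1 ≤ n → |thetaN n - (n : ℝ)| ≤ C * n := by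
    intro n hn
    have hnR : (1:ℝ) ≤ n := by exact_mod_cast hn
    by_cases h : N₁ ≤ n
    · calc |thetaN n - (n : ℝ)| ≤ 1 * n := hN₁ n h
        _ ≤ C * n := by
            apply mul_le_mul_of_nonneg_right hC1
            linarith
    · push_neg at h
      have : |thetaN n - (n : ℝ)| ≤ ∑ m ∈ Finset.range N₁, |thetaN m - (m : ℝ)| :=
        Finset.single_le_sum (f := fun m => |thetaN m - (m:ℝ)|) (fun m _ => abs_nonneg _) (Finset.mem_range.mpr h)
      calc |thetaN n - (n : ℝ)| ≤ C := by simp only [hCdef]; linarith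
        _ = C * 1 := by ring
        _ ≤ C * n := by apply mul_le_mul_of_nonneg_left hnR hC0
  obtain ⟨N₀, hN₀1, hN₀⟩ := key (ε / 8) (by positivity)
  set A : ℝ := 1 + C + 2 * C * N₀ + ε / 4 with hAdef
  have hA0 : 0 < A := by positivity
  set B : ℝ := max 1 (A / (ε / 2)) with hBdef
  obtain ⟨X₁, hX₁⟩ := Filter.eventually_atTop.mp (Real.tendsto_log_atTop.eventually_ge_atTop B)
  refine ⟨max X₁ 1, fun x hx => ?_⟩
  have hx1 : (1:ℝ) ≤ x := le_trans (le_max_right _ _) hx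
  have hlogB : B ≤ Real.log x := hX₁ x (le_trans (le_max_left _ _) hx)
  have hlog1 : 1 ≤ Real.log x := le_trans (le_max_left _ _) hlogB
  have hlogpos : 0 < Real.log x := by linarith
  have hN : 1 ≤ ⌊x⌋₊ := Nat.floor_pos.mpr hx1
  have hH := H_bound x hx1 C (ε / 8) hC0 (by positivity) N₀ hE1 hN₀
  have hHs : Hs ⌊x⌋₊ ≤ 1 + Real.log x := by
    refine (Hs_le ⌊x⌋₊ hN).trans ?_
    have h1 : (0:ℝ) < (⌊x⌋₊ : ℝ) := by exact_mod_cast hN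
    have h2 : ((⌊x⌋₊ : ℕ) : ℝ) ≤ x := Nat.floor_le (by linarith)
    have := Real.log_le_log h1 h2
    linarith
  have hHx : |H x| ≤ A + (ε / 4) * Real.log x := by
    have : |H x| ≤ |H x - 1| + 1 := by
      calc |H x| = |(H x - 1) + 1| := by ring_nf
        _ ≤ |H x - 1| + |(1:ℝ)| := abs_add_le _ _
        _ = |H x - 1| + 1 := by norm_num
    have h2 : 2 * (ε / 8) * Hs ⌊x⌋₊ ≤ (ε / 4) * (1 + Real.log x) := by
      have hHs0 : 0 ≤ Hs ⌊x⌋₊ := Finset.sum_nonneg fun k _ => by positivity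
      calc 2 * (ε / 8) * Hs ⌊x⌋₊ = (ε / 4) * Hs ⌊x⌋₊ := by ring
        _ ≤ (ε / 4) * (1 + Real.log x) := by
            apply mul_le_mul_of_nonneg_left hHs (by positivity)
    simp only [hAdef]
    calc |H x| ≤ |H x - 1| + 1 := this
      _ ≤ (C + 2 * C * N₀ + 2 * (ε / 8) * Hs ⌊x⌋₊) + 1 := by linarith
      _ ≤ (C + 2 * C * N₀ + (ε / 4) * (1 + Real.log x)) + 1 := by linarith
      _ = (1 + C + 2 * C * N₀ + ε / 4) + (ε / 4) * Real.log x := by ring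
  rw [Real.dist_eq, sub_zero, abs_div, abs_of_pos hlogpos]
  have hAle : A / Real.log x ≤ ε / 2 := by
    rw [div_le_iff₀ hlogpos]
    have hB2 : A / (ε / 2) ≤ Real.log x := le_trans (le_max_right _ _) hlogB
    rw [div_le_iff₀ (by positivity : (0:ℝ) < ε / 2)] at hB2
    linarith [hB2]
  calc |H x| / Real.log x ≤ (A + (ε / 4) * Real.log x) / Real.log x := by gcongr
    _ = A / Real.log x + ε / 4 := by
        rw [add_div, mul_div_assoc, div_self (ne_of_gt hlogpos), mul_one]
    _ ≤ ε / 2 + ε / 4 := by linarith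
    _ < ε := by linarith
end
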